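/- arXiv:1606.07478 — 4 statements merged into one kernel-verified Lean document; each statement's English description precedes it below -/
import Mathlib

section
/- Fix a simple root α_i, let Δ_P = Δ \ {α_i}, and define the linear functional F_i(v) = ⟨v, ∑_{β ∈ R^+ \ R_P^+} β⟩. Then F_i(α^∨) ≥ 0 for every positive root α. -/
noncomputable section

open scoped Classical
open scoped RealInnerProductSpace
open Finset

variable {V : Type*} [NormedAddCommGroup V] [InnerProductSpace ℝ V] [FiniteDimensional ℝ V]

/-- A (reduced, crystallographic) root system in a Euclidean space, with a fixed
choice of positive roots `Rpos` and simple roots `Δ`. -/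
structure IsRootSystem (R Rpos Δ : Finset V) : Prop where
  nonzero : ∀ α ∈ R, α ≠ (0 : V)
  reduced : ∀ α ∈ R, ∀ c : ℝ, c • α ∈ R → c = 1 ∨ c = -1
  crystallographic : ∀ α ∈ R, ∀ β ∈ R, ∃ n : ℤ, 2 * ⟪β, α⟫ / ⟪α, α⟫ = (n : ℝ)
  reflect_mem : ∀ α ∈ R, ∀ β ∈ R, β - (2 * ⟪β, α⟫ / ⟪α, α⟫) • α ∈ R
  pos_subset : Rpos ⊆ R
  pos_or_neg : ∀ α ∈ R, α ∈ Rpos ∨ -α ∈ Rpos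
  not_both : ∀ α ∈ Rpos, -α ∉ Rpos
  simple_subset : Δ ⊆ Rpos
  simple_nonneg_comb : ∀ α ∈ Rpos, ∃ c : V → ℝ, (∀ β ∈ Δ, 0 ≤ c β) ∧ α = ∑ β ∈ Δ, c β • β
  simple_indep : LinearIndependent ℝ (fun β : (Δ : Set V) => (β : V))

/-- The coroot `α^∨ = 2α/(α,α)` of a root `α`, in the Euclidean identification. -/
def coroot (α : V) : V := (2 / ⟪α, α⟫) • α

/-- The half-sum `ρ` of the positive roots. -/
def rho (Rpos : Finset V) : V := (2 : ℝ)⁻¹ • ∑ α ∈ Rpos, α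

/-- The reflection `r_α` across the hyperplane orthogonal to `α`. -/
def sref (α : V) : V ≃ₗᵢ[ℝ] V := Submodule.reflection (ℝ ∙ α)ᗮ

/-- The Weyl group: the subgroup of isometries generated by the reflections in the roots. -/
def weylGroup (R : Finset V) : Subgroup (V ≃ₗᵢ[ℝ] V) :=
  Subgroup.closure { g | ∃ α ∈ R, g = sref α }

/-- The length of a Weyl group element: the number of positive roots it sends negative. -/
def lenW (Rpos : Finset V) (w : V ≃ₗᵢ[ℝ] V) : ℕ :=
  (Rpos.filter (fun α => w α ∉ Rpos)).card

/-- Dominance: nonnegative pairing against every positive root. -/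
def isDominant (Rpos : Finset V) (lam : V) : Prop := ∀ α ∈ Rpos, 0 ≤ ⟪lam, α⟫

/-- Dominance order: `μ ≤ lam` iff `lam - μ` is a nonnegative rational combination of the
coroots of the roots in `S`. -/
def domLE (S : Finset V) (μ lam : V) : Prop :=
  ∃ c : V → ℚ, (∀ β ∈ S, 0 ≤ c β) ∧ lam - μ = ∑ β ∈ S, (c β : ℝ) • coroot β

/-- The coroot lattice `Q^∨`. -/
def corootLattice (R : Finset V) : Submodule ℤ V := Submodule.span ℤ (coroot '' (R : Set V))

namespace Aux
variable {R Rpos Δ : Finset V}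

lemma indep_coeffs (h : IsRootSystem R Rpos Δ) (f : V → ℝ)
    (hf : ∑ k ∈ Δ, f k • k = 0) : ∀ k ∈ Δ, f k = 0 := by
  intro k hk
  have hsum : ∑ i : (Δ : Set V), f i • (i : V) = 0 := by
    rw [← hf]; exact Finset.sum_coe_sort Δ (fun k => f k • k)
  exact Fintype.linearIndependent_iff.mp h.simple_indep (fun i => f i) hsum ⟨k, hk⟩

lemma root_inner_pos (h : IsRootSystem R Rpos Δ) {a : V} (ha : a ∈ R) : 0 < ⟪a, a⟫ :=
  lt_of_le_of_ne real_inner_self_nonneg (Ne.symm (inner_self_ne_zero.mpr (h.nonzero a ha)))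

/-- Distinct simple roots have nonpositive inner product. -/
lemma simple_inner_nonpos (h : IsRootSystem R Rpos Δ) {a b : V} (ha : a ∈ Δ) (hb : b ∈ Δ)
    (hab : a ≠ b) : ⟪a, b⟫ ≤ 0 := by
  by_contra hpos
  push_neg at hpos
  have haR : a ∈ R := h.pos_subset (h.simple_subset ha)
  have hbR : b ∈ R := h.pos_subset (h.simple_subset hb)
  have haa : 0 < ⟪a, a⟫ := root_inner_pos h haR
  set c : ℝ := 2 * ⟪b, a⟫ / ⟪a, a⟫ with hc
  have hcpos : 0 < c := by
    apply div_pos _ haa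
    rw [real_inner_comm] at hpos
    linarith
  have hγ : b - c • a ∈ R := h.reflect_mem a haR b hbR
  rcases h.pos_or_neg _ hγ with hg | hg
  · obtain ⟨d, hd0, hdsum⟩ := h.simple_nonneg_comb _ hg
    have key : ∑ k ∈ Δ, (d k + (if k = a then c else 0) - (if k = b then 1 else 0)) • k = 0 := by
      simp only [sub_smul, add_smul, ite_smul, zero_smul, one_smul,
        Finset.sum_sub_distrib, Finset.sum_add_distrib, Finset.sum_ite_eq', ha, hb, if_true]
      rw [← hdsum]
      abel
    have := indep_coeffs h _ key a ha
    simp [hab] at this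
    have := hd0 a ha
    linarith
  · obtain ⟨e, he0, hesum⟩ := h.simple_nonneg_comb _ hg
    have hneg : c • a - b = ∑ k ∈ Δ, e k • k := by rw [← hesum]; abel
    have key : ∑ k ∈ Δ, (e k - (if k = a then c else 0) + (if k = b then 1 else 0)) • k = 0 := by
      simp only [sub_smul, add_smul, ite_smul, zero_smul, one_smul,
        Finset.sum_sub_distrib, Finset.sum_add_distrib, Finset.sum_ite_eq', ha, hb, if_true]
      rw [← hneg]
      abel
    have := indep_coeffs h _ key b hb
    simp [Ne.symm hab] at this
    have := he0 b hb
    linarith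

/-- The simple reflection in `a` maps positive roots other than `a` to positive roots. -/
lemma refl_pos (h : IsRootSystem R Rpos Δ) {a β : V} (ha : a ∈ Δ) (hβ : β ∈ Rpos)
    (hne : β ≠ a) : β - (2 * ⟪β, a⟫ / ⟪a, a⟫) • a ∈ Rpos := by
  have haR : a ∈ R := h.pos_subset (h.simple_subset ha)
  set c : ℝ := 2 * ⟪β, a⟫ / ⟪a, a⟫ with hc
  have hγ : β - c • a ∈ R := h.reflect_mem a haR β (h.pos_subset hβ)
  rcases h.pos_or_neg _ hγ with hg | hg
  · exact hg
  · exfalso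
    obtain ⟨d, hd0, hdsum⟩ := h.simple_nonneg_comb β hβ
    obtain ⟨e, he0, hesum⟩ := h.simple_nonneg_comb _ hg
    have hneg : c • a - β = ∑ k ∈ Δ, e k • k := by rw [← hesum]; abel
    have key : ∑ k ∈ Δ, (d k + e k - (if k = a then c else 0)) • k = 0 := by
      simp only [sub_smul, add_smul, ite_smul, zero_smul,
        Finset.sum_sub_distrib, Finset.sum_add_distrib, Finset.sum_ite_eq', ha, if_true]
      rw [← hdsum, ← hneg]
      abel
    have hco := indep_coeffs h _ key
    have hβa : β = d a • a := by
      rw [hdsum]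
      apply Finset.sum_eq_single_of_mem a ha
      intro k hk hka
      have := hco k hk
      rw [if_neg hka] at this
      have hdk := hd0 k hk
      have hek := he0 k hk
      have : d k = 0 := by linarith
      rw [this, zero_smul]
    have hβR : d a • a ∈ R := hβa ▸ h.pos_subset hβ
    rcases h.reduced a haR (d a) hβR with h1 | h1
    · exact hne (by rw [hβa, h1, one_smul])
    · exact h.not_both a (h.simple_subset ha) (by rw [← neg_one_smul ℝ a, ← h1, ← hβa]; exact hβ)

/-- The reflection is an involution. -/
lemma refl_invol {a : V} (ha0 : ⟪a, a⟫ ≠ 0) (β : V) :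
    (β - (2 * ⟪β, a⟫ / ⟪a, a⟫) • a) -
      (2 * ⟪β - (2 * ⟪β, a⟫ / ⟪a, a⟫) • a, a⟫ / ⟪a, a⟫) • a = β := by
  have h1 : ⟪β - (2 * ⟪β, a⟫ / ⟪a, a⟫) • a, a⟫ = -⟪β, a⟫ := by
    rw [inner_sub_left, real_inner_smul_left]
    field_simp
    ring
  rw [h1]
  have h2 : 2 * -⟪β, a⟫ / ⟪a, a⟫ = -(2 * ⟪β, a⟫ / ⟪a, a⟫) := by ring
  rw [h2, neg_smul, sub_neg_eq_add, sub_add_cancel]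

/-- If `T` is stable under the reflection in `a`, the sum over `T` is orthogonal to `a`. -/
lemma inner_sum_eq_zero (h : IsRootSystem R Rpos Δ) {a : V} (ha : a ∈ Δ) (T : Finset V)
    (hT : ∀ β ∈ T, β - (2 * ⟪β, a⟫ / ⟪a, a⟫) • a ∈ T) :
    ⟪a, ∑ β ∈ T, β⟫ = 0 := by
  have haR : a ∈ R := h.pos_subset (h.simple_subset ha)
  have haa : (0:ℝ) < ⟪a, a⟫ := root_inner_pos h haR
  have hsum : ∑ β ∈ T, (β - (2 * ⟪β, a⟫ / ⟪a, a⟫) • a) = ∑ β ∈ T, β := by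
    apply Finset.sum_nbij' (fun β => β - (2 * ⟪β, a⟫ / ⟪a, a⟫) • a)
      (fun β => β - (2 * ⟪β, a⟫ / ⟪a, a⟫) • a) hT hT
    · intro β hβ; exact refl_invol haa.ne' β
    · intro β hβ; exact refl_invol haa.ne' β
    · intro β hβ; rfl
  rw [Finset.sum_sub_distrib] at hsum
  have h2 : ∑ β ∈ T, (2 * ⟪β, a⟫ / ⟪a, a⟫) • a = (2 * ⟪∑ β ∈ T, β, a⟫ / ⟪a, a⟫) • a := by
    rw [← Finset.sum_smul, sum_inner]
    congr 1
    rw [Finset.mul_sum, Finset.sum_div]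
  rw [h2] at hsum
  have h3 : (2 * ⟪∑ β ∈ T, β, a⟫ / ⟪a, a⟫) • a = 0 := by
    have := sub_eq_self.mp hsum
    exact this
  rcases smul_eq_zero.mp h3 with h4 | h4
  · rw [real_inner_comm]
    have := div_eq_zero_iff.mp h4
    rcases this with h5 | h5
    · linarith [mul_left_cancel₀ (two_ne_zero (α := ℝ)) (by linarith : (2:ℝ) * ⟪∑ β ∈ T, β, a⟫ = 2 * 0)]
    · linarith
  · exact absurd h4 (h.nonzero a haR)

lemma simple_inner_N_eq_zero (h : IsRootSystem R Rpos Δ) {αi a : V} (hi : αi ∈ Δ)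
    (ha : a ∈ Δ.erase αi) :
    ⟪a, ∑ β ∈ Rpos.filter
      (fun β => β ∉ Submodule.span ℝ (((Δ.erase αi) : Finset V) : Set V)), β⟫ = 0 := by
  have haΔ : a ∈ Δ := Finset.mem_of_mem_erase ha
  have haspan : a ∈ Submodule.span ℝ (((Δ.erase αi) : Finset V) : Set V) :=
    Submodule.subset_span (by exact_mod_cast ha)
  apply inner_sum_eq_zero h haΔ
  intro β hβ
  rw [Finset.mem_filter] at hβ ⊢
  obtain ⟨hβp, hβs⟩ := hβ
  have hne : β ≠ a := fun h' => hβs (h' ▸ haspan)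
  refine ⟨refl_pos h haΔ hβp hne, ?_⟩
  intro hmem
  apply hβs
  have hβeq : β = (β - (2 * ⟪β, a⟫ / ⟪a, a⟫) • a) + (2 * ⟪β, a⟫ / ⟪a, a⟫) • a := by abel
  rw [hβeq]
  exact Submodule.add_mem _ hmem (Submodule.smul_mem _ _ haspan)

lemma inner_sum_pos_self (h : IsRootSystem R Rpos Δ) {αi : V} (hi : αi ∈ Δ) :
    ⟪αi, ∑ β ∈ Rpos, β⟫ = ⟪αi, αi⟫ := by
  have hip : αi ∈ Rpos := h.simple_subset hi
  have haa : (0:ℝ) < ⟪αi, αi⟫ := root_inner_pos h (h.pos_subset hip)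
  have key : ⟪αi, ∑ β ∈ Rpos.erase αi, β⟫ = 0 := by
    apply inner_sum_eq_zero h hi
    intro β hβ
    rw [Finset.mem_erase] at hβ ⊢
    obtain ⟨hne, hβp⟩ := hβ
    refine ⟨?_, refl_pos h hi hβp hne⟩
    intro heq
    have hinv := refl_invol haa.ne' β
    rw [heq] at hinv
    have hβeq : β = αi - (2 * ⟪αi, αi⟫ / ⟪αi, αi⟫) • αi := hinv.symm
    have h2 : (2 * ⟪αi, αi⟫ / ⟪αi, αi⟫) = 2 := by field_simp
    rw [h2] at hβeq
    have hβneg : β = -αi := by rw [hβeq, two_smul]; abel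
    exact h.not_both αi hip (by rw [← hβneg]; exact hβp)
  rw [← Finset.add_sum_erase Rpos _ hip, inner_add_right, key, add_zero]

lemma inner_RP_nonpos (h : IsRootSystem R Rpos Δ) {αi β : V} (hi : αi ∈ Δ) (hβ : β ∈ Rpos)
    (hβs : β ∈ Submodule.span ℝ (((Δ.erase αi) : Finset V) : Set V)) : ⟪αi, β⟫ ≤ 0 := by
  obtain ⟨c, hc0, hcsum⟩ := h.simple_nonneg_comb β hβ
  rw [Submodule.mem_span_finset] at hβs
  obtain ⟨g, -, hg⟩ := hβs
  have hβ2 : β = ∑ k ∈ Δ, (if k = αi then 0 else g k) • k := by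
    rw [← Finset.add_sum_erase Δ _ hi, if_pos rfl, zero_smul, zero_add, ← hg]
    apply Finset.sum_congr rfl
    intro k hk
    rw [if_neg (Finset.mem_erase.mp hk).1]
  have key : ∑ k ∈ Δ, (c k - if k = αi then 0 else g k) • k = 0 := by
    simp only [sub_smul, Finset.sum_sub_distrib, ← hcsum, ← hβ2, sub_self]
  have hcαi : c αi = 0 := by
    have := indep_coeffs h _ key αi hi
    simpa using this
  rw [hcsum, inner_sum]
  apply Finset.sum_nonpos
  intro k hk
  rw [real_inner_smul_right]
  by_cases hkai : k = αi
  · subst hkai; rw [hcαi]; simp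
  · have hne : αi ≠ k := fun e => hkai e.symm
    nlinarith [hc0 k hk, simple_inner_nonpos h hi hk hne]
end Aux

theorem stmt_3 (R Rpos Δ : Finset V) (h : IsRootSystem R Rpos Δ)
    (αi : V) (hi : αi ∈ Δ) (α : V) (hα : α ∈ Rpos) :
    0 ≤ ⟪coroot α,
      ∑ β ∈ Rpos.filter
        (fun β => β ∉ Submodule.span ℝ (((Δ.erase αi) : Finset V) : Set V)), β⟫ := by
  set N := Rpos.filter
    (fun β => β ∉ Submodule.span ℝ (((Δ.erase αi) : Finset V) : Set V)) with hN
  have hsimple : ∀ k ∈ Δ, 0 ≤ ⟪k, ∑ β ∈ N, β⟫ := by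
    intro k hk
    by_cases hkai : k = αi
    · subst hkai
      have hsplit : ∑ β ∈ Rpos.filter
            (fun β => β ∈ Submodule.span ℝ (((Δ.erase k) : Finset V) : Set V)), β
          + ∑ β ∈ N, β = ∑ β ∈ Rpos, β :=
        Finset.sum_filter_add_sum_filter_not Rpos _ _
      have h1 : ⟪k, ∑ β ∈ Rpos, β⟫ = ⟪k, k⟫ := Aux.inner_sum_pos_self h hk
      have h2 : ⟪k, ∑ β ∈ Rpos.filter
          (fun β => β ∈ Submodule.span ℝ (((Δ.erase k) : Finset V) : Set V)), β⟫ ≤ 0 := by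
        rw [inner_sum]
        apply Finset.sum_nonpos
        intro β hβ
        rw [Finset.mem_filter] at hβ
        exact Aux.inner_RP_nonpos h hk hβ.1 hβ.2
      have haa : (0:ℝ) < ⟪k, k⟫ := Aux.root_inner_pos h (h.pos_subset (h.simple_subset hk))
      have h3 : ⟪k, ∑ β ∈ N, β⟫ = ⟪k, k⟫
          - ⟪k, ∑ β ∈ Rpos.filter
              (fun β => β ∈ Submodule.span ℝ (((Δ.erase k) : Finset V) : Set V)), β⟫ := by
        rw [← h1, ← hsplit, inner_add_right]; ring
      rw [h3]
      linarith
    · rw [hN, Aux.simple_inner_N_eq_zero h hi (Finset.mem_erase.mpr ⟨hkai, hk⟩)]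
  obtain ⟨c, hc0, hcsum⟩ := h.simple_nonneg_comb α hα
  have haa : (0:ℝ) < ⟪α, α⟫ := Aux.root_inner_pos h (h.pos_subset hα)
  rw [show coroot α = (2 / ⟪α, α⟫) • α from rfl, real_inner_smul_left]
  apply mul_nonneg (div_nonneg (by norm_num) haa.le)
  rw [hcsum, sum_inner]
  apply Finset.sum_nonneg
  intro k hk
  rw [real_inner_smul_left]
  exact mul_nonneg (hc0 k hk) (hsimple k hk)
end
end

section
/- Let λ be a regular element of the coroot lattice (i.e., ⟨λ, α⟩ ≠ 0 for all roots α) and let w be a nontrivial element of the finite Weyl group W of order m. Then the Newton point ν = ((1/m) ∑_{i=1}^m w^i(λ))^+, the dominant representative of the W-orbit of the orbit-average, is strictly less than λ^+ in dominance order (strictly: ν ≤ λ^+ and ν ≠ λ^+). -/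
noncomputable section

open scoped Classical
open scoped RealInnerProductSpace
open Finset

variable {V : Type*} [NormedAddCommGroup V] [InnerProductSpace ℝ V] [FiniteDimensional ℝ V]

set_option linter.unusedSectionVars false
set_option linter.unusedVariables false
/-! ### basic reflection lemmas -/

lemma inner_self_pos_of_ne {α : V} (hα : α ≠ 0) : (0:ℝ) < ⟪α, α⟫ :=
  lt_of_le_of_ne real_inner_self_nonneg (fun e => hα (inner_self_eq_zero.1 e.symm))

lemma sref_apply' {α : V} (hα : α ≠ 0) (x : V) :
    sref α x = x - (2 * ⟪x, α⟫ / ⟪α, α⟫) • α := by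
  have hαα : (0:ℝ) < ⟪α, α⟫ := inner_self_pos_of_ne hα
  have hne : ⟪α, α⟫ ≠ 0 := ne_of_gt hαα
  set c : ℝ := ⟪x, α⟫ / ⟪α, α⟫ with hc
  have hyy : x - c • α ∈ (ℝ ∙ α)ᗮ := by
    rw [Submodule.mem_orthogonal_singleton_iff_inner_right]
    rw [inner_sub_right, real_inner_smul_right, hc]
    field_simp [real_inner_comm α x]
    rw [real_inner_comm α x, sub_self]
  have h1 : sref α (x - c • α) = x - c • α := Submodule.reflection_mem_subspace_eq_self hyy
  have h2 : sref α α = -α :=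
    Submodule.reflection_mem_subspace_orthogonal_precomplement_eq_neg (Submodule.mem_span_singleton_self α)
  have hdec : x = c • α + (x - c • α) := by abel
  calc sref α x = sref α (c • α + (x - c • α)) := by rw [← hdec]
    _ = c • sref α α + sref α (x - c • α) := by rw [map_add, map_smul]
    _ = c • (-α) + (x - c • α) := by rw [h1, h2]
    _ = x - (2 * ⟪x, α⟫ / ⟪α, α⟫) • α := by
        rw [hc]
        rw [smul_neg]
        have : (2 * ⟪x, α⟫ / ⟪α, α⟫) = c + c := by rw [hc]; ring
        rw [this, add_smul]
        abel

lemma sref_sref (α x : V) : sref α (sref α x) = x := Submodule.reflection_reflection _ x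

lemma sref_mul_self (α : V) : sref α * sref α = 1 := by
  ext x
  simp only [LinearIsometryEquiv.coe_mul, Function.comp_apply, LinearIsometryEquiv.coe_one, id]
  exact sref_sref α x

lemma sref_inv (α : V) : (sref α)⁻¹ = sref α := by
  rw [inv_eq_iff_mul_eq_one, sref_mul_self]

lemma sref_self {α : V} (hα : α ≠ 0) : sref α α = -α :=
  Submodule.reflection_mem_subspace_orthogonal_precomplement_eq_neg (Submodule.mem_span_singleton_self α)

lemma sref_neg (α : V) : sref (-α) = sref α := by
  unfold sref
  congr 1
  congr 1
  rw [show ({-α} : Set V) = -{α} by simp, Submodule.span_neg]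

lemma sref_conj (g : V ≃ₗᵢ[ℝ] V) {α : V} (hα : α ≠ 0) :
    sref (g α) = g * sref α * g⁻¹ := by
  have hgα : g α ≠ 0 := fun h0 => hα (by rw [← g.symm_apply_apply α, h0, map_zero])
  ext x
  have e1 : ⟪g⁻¹ x, α⟫ = ⟪x, g α⟫ := by
    rw [← g.inner_map_map (g⁻¹ x) α]
    congr 1
    simp
  have e2 : ⟪g α, g α⟫ = ⟪α, α⟫ := g.inner_map_map α α
  simp only [LinearIsometryEquiv.coe_mul, Function.comp_apply]
  rw [sref_apply' hgα, sref_apply' hα, map_sub, map_smul, e1, e2]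
  congr 1
  simp

lemma sref_selfadj (γ x y : V) : ⟪sref γ x, y⟫ = ⟪x, sref γ y⟫ := by
  conv_lhs => rw [← sref_sref γ y]
  rw [(sref γ).inner_map_map]

lemma coroot_map (g : V ≃ₗᵢ[ℝ] V) (α : V) : coroot (g α) = g (coroot α) := by
  unfold coroot
  rw [g.inner_map_map, map_smul]

lemma inner_coroot_eq (x α : V) : ⟪x, coroot α⟫ = 2 * ⟪x, α⟫ / ⟪α, α⟫ := by
  unfold coroot
  rw [real_inner_smul_right]
  ring


/-! ### Weyl group stability -/

variable {R Rpos Δ : Finset V}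

def presR (R : Finset V) : Subgroup (V ≃ₗᵢ[ℝ] V) where
  carrier := {g | (∀ α ∈ R, g α ∈ R) ∧ (∀ x : V, (∀ α ∈ R, ⟪x, α⟫ = 0) → g x = x)}
  one_mem' := ⟨fun α hα => by simpa using hα, fun x _ => by simp⟩
  mul_mem' := by
    rintro g g' ⟨hg1, hg2⟩ ⟨hg1', hg2'⟩
    refine ⟨fun α hα => ?_, fun x hx => ?_⟩
    · simpa using hg1 _ (hg1' α hα)
    · have := hg2' x hx
      simp only [LinearIsometryEquiv.coe_mul, Function.comp_apply]
      rw [this]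
      exact hg2 x hx
  inv_mem' := by
    rintro g ⟨hg1, hg2⟩
    have hsurj : ∀ β ∈ R, ∃ α ∈ R, g α = β := by
      have hinj : Function.Injective (fun a : {x // x ∈ R} => (⟨g a, hg1 a a.2⟩ : {x // x ∈ R})) := by
        intro a b hab
        have : g a = g b := congrArg Subtype.val hab
        exact Subtype.ext (g.injective this)
      have hs := Finite.injective_iff_surjective.1 hinj
      intro β hβ
      obtain ⟨a, ha⟩ := hs ⟨β, hβ⟩
      exact ⟨a, a.2, congrArg Subtype.val ha⟩
    refine ⟨fun β hβ => ?_, fun x hx => ?_⟩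
    · obtain ⟨α, hαR, hgα⟩ := hsurj β hβ
      have : g⁻¹ β = α := by
        simp only [LinearIsometryEquiv.coe_inv]
        rw [← hgα]
        exact g.symm_apply_apply α
      rw [this]; exact hαR
    · have hx' : ∀ α ∈ R, ⟪g⁻¹ x, α⟫ = 0 := by
        intro α hα
        have : ⟪g (g⁻¹ x), g α⟫ = ⟪g⁻¹ x, α⟫ := g.inner_map_map _ _
        rw [← this]
        have hgg : g (g⁻¹ x) = x := by simp
        rw [hgg]
        exact hx (g α) (hg1 α hα)
      have := hg2 (g⁻¹ x) hx'
      have hgg : g (g⁻¹ x) = x := by simp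
      rw [hgg] at this
      exact this.symm

lemma weyl_le_presR (h : IsRootSystem R Rpos Δ) : weylGroup R ≤ presR R := by
  refine (Subgroup.closure_le (presR R)).2 ?_
  rintro g ⟨α, hαR, rfl⟩
  have hα0 : α ≠ 0 := h.nonzero α hαR
  constructor
  · intro β hβ
    rw [sref_apply' hα0]
    exact h.reflect_mem α hαR β hβ
  · intro x hx
    rw [sref_apply' hα0, hx α hαR]
    simp

lemma weyl_apply_mem (h : IsRootSystem R Rpos Δ) {g : V ≃ₗᵢ[ℝ] V} (hg : g ∈ weylGroup R)
    {α : V} (hα : α ∈ R) : g α ∈ R :=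
  (weyl_le_presR h hg).1 α hα

lemma weyl_fix_orth (h : IsRootSystem R Rpos Δ) {g : V ≃ₗᵢ[ℝ] V} (hg : g ∈ weylGroup R)
    {x : V} (hx : ∀ α ∈ R, ⟪x, α⟫ = 0) : g x = x :=
  (weyl_le_presR h hg).2 x hx

lemma weyl_ext (h : IsRootSystem R Rpos Δ) {g : V ≃ₗᵢ[ℝ] V} (hg : g ∈ weylGroup R)
    (hfix : ∀ α ∈ R, g α = α) : g = 1 := by
  ext x
  set K : Submodule ℝ V := Submodule.span ℝ (R : Set V) with hK
  set p : V := (K.orthogonalProjectionOnto x : V) with hp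
  have hxp : x - p ∈ Kᗮ := K.sub_starProjection_mem_orthogonal x
  have h1 : g p = p := by
    have hpK : p ∈ K := (K.orthogonalProjectionOnto x).2
    refine Submodule.span_induction (fun y hy => hfix y hy) (map_zero g) ?_ ?_ hpK
    · intro y z _ _ hy hz
      rw [map_add, hy, hz]
    · intro t y _ hy
      rw [map_smul, hy]
  have h2 : g (x - p) = x - p := by
    apply weyl_fix_orth h hg
    intro α hα
    have hαK : (α : V) ∈ K := Submodule.subset_span hα
    have h3 := (Submodule.mem_orthogonal K (x - p)).1 hxp α hαK
    rw [real_inner_comm]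
    exact h3
  have : g x = g p + g (x - p) := by rw [← map_add]; congr 1; abel
  rw [this, h1, h2]
  simp only [LinearIsometryEquiv.coe_one, id]
  abel

lemma weyl_finOrder (h : IsRootSystem R Rpos Δ) {g : V ≃ₗᵢ[ℝ] V} (hg : g ∈ weylGroup R) :
    IsOfFinOrder g := by
  have hmem : ∀ k : ℕ, g ^ k ∈ weylGroup R := fun k => pow_mem hg k
  have key : ∀ i j : ℕ, i < j →
      (∀ α ∈ R, (g ^ i) α = (g ^ j) α) → IsOfFinOrder g := by
    intro i j hij hagree
    have hji : g ^ j = g ^ i * g ^ (j - i) := by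
      rw [← pow_add]
      congr 1
      omega
    have : g ^ (j - i) = 1 := by
      apply weyl_ext h (hmem _)
      intro α hα
      have := hagree α hα
      rw [hji] at this
      simp only [LinearIsometryEquiv.coe_mul, Function.comp_apply] at this
      exact ((g ^ i).injective this.symm)
    exact isOfFinOrder_iff_pow_eq_one.2 ⟨j - i, by omega, this⟩
  obtain ⟨i, j, hij, hfe⟩ := Finite.exists_ne_map_eq_of_infinite
    (fun k : ℕ => (fun a : {x // x ∈ R} => (⟨(g ^ k) a, weyl_apply_mem h (hmem k) a.2⟩ : {x // x ∈ R})))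
  have hagree : ∀ α ∈ R, (g ^ i) α = (g ^ j) α := by
    intro α hα
    exact congrArg Subtype.val (congrFun hfe ⟨α, hα⟩)
  rcases lt_or_gt_of_ne hij with hlt | hlt
  · exact key i j hlt hagree
  · exact key j i hlt (fun α hα => (hagree α hα).symm)

/-! ### simple-root combinatorics -/

def NN (Δ : Finset V) (x : V) : Prop :=
  ∃ c : V → ℝ, (∀ β ∈ Δ, 0 ≤ c β) ∧ x = ∑ β ∈ Δ, c β • β

lemma NN_zero : NN Δ (0 : V) :=
  ⟨fun _ => 0, fun _ _ => le_refl _, by simp⟩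

lemma NN_add {x y : V} (hx : NN Δ x) (hy : NN Δ y) : NN Δ (x + y) := by
  obtain ⟨c, hc0, rfl⟩ := hx
  obtain ⟨d, hd0, rfl⟩ := hy
  refine ⟨fun β => c β + d β, fun β hβ => add_nonneg (hc0 β hβ) (hd0 β hβ), ?_⟩
  rw [← Finset.sum_add_distrib]
  congr 1
  ext β
  rw [add_smul]

lemma NN_smul {x : V} {t : ℝ} (ht : 0 ≤ t) (hx : NN Δ x) : NN Δ (t • x) := by
  obtain ⟨c, hc0, rfl⟩ := hx
  refine ⟨fun β => t * c β, fun β hβ => mul_nonneg ht (hc0 β hβ), ?_⟩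
  rw [Finset.smul_sum]
  congr 1
  ext β
  rw [smul_smul]

lemma NN_sum {ι : Type*} (s : Finset ι) (f : ι → V) (hf : ∀ i ∈ s, NN Δ (f i)) :
    NN Δ (∑ i ∈ s, f i) := by
  classical
  induction s using Finset.induction_on with
  | empty => simpa using NN_zero
  | insert _ _ hnot ih =>
    rw [Finset.sum_insert hnot]
    exact NN_add (hf _ (Finset.mem_insert_self _ _))
      (ih (fun i hi => hf i (Finset.mem_insert_of_mem hi)))

lemma coeff_eq_zero (h : IsRootSystem R Rpos Δ) {c : V → ℝ}
    (hc : ∑ β ∈ Δ, c β • β = 0) : ∀ β ∈ Δ, c β = 0 := by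
  intro β hβ
  have key := linearIndependent_iff'.1 h.simple_indep Finset.univ
    (fun i => c i) ?_ ⟨β, hβ⟩ (Finset.mem_univ _)
  · exact key
  · rw [← hc]
    refine Finset.sum_bij' (fun (a : (Δ : Set V)) _ => (a : V))
      (fun b hb => (⟨b, hb⟩ : (Δ : Set V))) ?_ ?_ ?_ ?_ ?_
    · intro a _; exact a.2
    · intro a _; exact Finset.mem_univ _
    · intro a _; rfl
    · intro a _; rfl
    · intro a _; rfl

lemma exists_pos_coeff (h : IsRootSystem R Rpos Δ) {β : V} (hβ : β ∈ R)
    {c : V → ℝ} (hc0 : ∀ γ ∈ Δ, 0 ≤ c γ) (hrep : β = ∑ γ ∈ Δ, c γ • γ) :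
    ∃ γ₀ ∈ Δ, 0 < c γ₀ := by
  by_contra hcon
  push_neg at hcon
  have hz : ∀ γ ∈ Δ, c γ = 0 := fun γ hγ => le_antisymm (hcon γ hγ) (hc0 γ hγ)
  have : β = 0 := by
    rw [hrep]
    apply Finset.sum_eq_zero
    intro γ hγ
    rw [hz γ hγ, zero_smul]
  exact h.nonzero β hβ this

lemma mem_pos_of_coeff (h : IsRootSystem R Rpos Δ) {δ : V} (hδ : δ ∈ R) (d : V → ℝ)
    (hrep : δ = ∑ γ ∈ Δ, d γ • γ) {γ₀ : V} (hγ₀ : γ₀ ∈ Δ) (hd : 0 < d γ₀) : δ ∈ Rpos := by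
  rcases h.pos_or_neg δ hδ with hp | hn
  · exact hp
  exfalso
  obtain ⟨c, hc0, hcrep⟩ := h.simple_nonneg_comb _ hn
  have hzero : ∑ γ ∈ Δ, (d γ + c γ) • γ = 0 := by
    have e : ∑ γ ∈ Δ, (d γ + c γ) • γ = (∑ γ ∈ Δ, d γ • γ) + ∑ γ ∈ Δ, c γ • γ := by
      rw [← Finset.sum_add_distrib]
      congr 1
      ext γ
      rw [add_smul]
    rw [e, ← hrep, ← hcrep]
    abel
  have := coeff_eq_zero h hzero γ₀ hγ₀
  have := hc0 γ₀ hγ₀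
  linarith

lemma mem_pos_of_NN (h : IsRootSystem R Rpos Δ) {δ : V} (hδ : δ ∈ R) (hNN : NN Δ δ) :
    δ ∈ Rpos := by
  obtain ⟨c, hc0, hrep⟩ := hNN
  obtain ⟨γ₀, hγ₀, hpos⟩ := exists_pos_coeff h hδ hc0 hrep
  exact mem_pos_of_coeff h hδ c hrep hγ₀ hpos

lemma sref_simple_perm (h : IsRootSystem R Rpos Δ) {α : V} (hα : α ∈ Δ) {β : V}
    (hβ : β ∈ Rpos) (hne : β ≠ α) : sref α β ∈ Rpos ∧ sref α β ≠ α := by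
  have hαpos : α ∈ Rpos := h.simple_subset hα
  have hαR : α ∈ R := h.pos_subset hαpos
  have hα0 : α ≠ 0 := h.nonzero α hαR
  have hβR : β ∈ R := h.pos_subset hβ
  obtain ⟨c, hc0, hcrep⟩ := h.simple_nonneg_comb β hβ
  -- a simple coefficient away from α is positive
  have hex : ∃ γ₀ ∈ Δ, γ₀ ≠ α ∧ 0 < c γ₀ := by
    by_contra hcon
    push_neg at hcon
    have hz : ∀ γ ∈ Δ, γ ≠ α → c γ = 0 := by
      intro γ hγ hγα
      exact le_antisymm (hcon γ hγ hγα) (hc0 γ hγ)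
    have hβα : β = c α • α := by
      rw [hcrep]
      rw [Finset.sum_eq_single α]
      · intro γ hγ hγα
        rw [hz γ hγ hγα, zero_smul]
      · intro hαn; exact absurd hα hαn
    rcases h.reduced α hαR (c α) (by rw [← hβα]; exact hβR) with h1 | h1
    · rw [h1, one_smul] at hβα
      exact hne hβα
    · rw [h1] at hβα
      have : β = -α := by rw [hβα]; simp
      rw [this] at hβ
      exact h.not_both α hαpos hβ
  obtain ⟨γ₀, hγ₀Δ, hγ₀ne, hγ₀pos⟩ := hex
  set k : ℝ := 2 * ⟪β, α⟫ / ⟪α, α⟫ with hk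
  have hsR : sref α β ∈ R := by
    rw [sref_apply' hα0]
    exact h.reflect_mem α hαR β hβR
  have hsum : ∑ γ ∈ Δ, (if γ = α then k else 0) • γ = k • α := by
    have : ∀ γ ∈ Δ, (if γ = α then k else 0) • γ = (if γ = α then k • γ else 0) := by
      intro γ _
      split <;> simp
    rw [Finset.sum_congr rfl this, Finset.sum_ite_eq' Δ α (fun γ => k • γ), if_pos hα]
  have hrep2 : sref α β = ∑ γ ∈ Δ, (c γ - (if γ = α then k else 0)) • γ := by
    have e : ∑ γ ∈ Δ, (c γ - (if γ = α then k else 0)) • γ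
        = (∑ γ ∈ Δ, c γ • γ) - ∑ γ ∈ Δ, (if γ = α then k else 0) • γ := by
      rw [← Finset.sum_sub_distrib]
      congr 1
      ext γ
      rw [sub_smul]
    rw [e, hsum, ← hcrep, sref_apply' hα0]
  have hpos : sref α β ∈ Rpos := by
    refine mem_pos_of_coeff h hsR _ hrep2 hγ₀Δ ?_
    rw [if_neg hγ₀ne]
    simpa using hγ₀pos
  refine ⟨hpos, fun hcon => ?_⟩
  have h5 : sref α (sref α β) = sref α α := by rw [hcon]
  rw [sref_sref, sref_self hα0] at h5
  rw [h5] at hβ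
  exact h.not_both α hαpos hβ

/-! ### rho -/

lemma sref_rho (h : IsRootSystem R Rpos Δ) {α : V} (hα : α ∈ Δ) :
    sref α (rho Rpos) = rho Rpos - α := by
  have hαpos : α ∈ Rpos := h.simple_subset hα
  have hα0 : α ≠ 0 := h.nonzero α (h.pos_subset hαpos)
  have hsum : sref α (∑ β ∈ Rpos, β) = ∑ β ∈ Rpos, sref α β := map_sum (sref α).toLinearEquiv _ _
  have hsplit : ∑ β ∈ Rpos, sref α β = sref α α + ∑ β ∈ Rpos.erase α, sref α β :=
    (Finset.add_sum_erase Rpos _ hαpos).symm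
  have herase : ∑ β ∈ Rpos.erase α, sref α β = ∑ β ∈ Rpos.erase α, β := by
    refine Finset.sum_bij' (fun β _ => sref α β) (fun β _ => sref α β) ?_ ?_ ?_ ?_ ?_
    · intro β hβ
      rw [Finset.mem_erase] at hβ ⊢
      have := sref_simple_perm h hα hβ.2 hβ.1
      exact ⟨this.2, this.1⟩
    · intro β hβ
      rw [Finset.mem_erase] at hβ ⊢
      have := sref_simple_perm h hα hβ.2 hβ.1
      exact ⟨this.2, this.1⟩
    · intro β _; exact sref_sref α β
    · intro β _; exact sref_sref α β
    · intro β _; rfl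
  have hANS : sref α (∑ β ∈ Rpos, β) = (∑ β ∈ Rpos, β) - (2:ℝ) • α := by
    rw [hsum, hsplit, herase, sref_self hα0]
    rw [Finset.sum_erase_eq_sub hαpos]
    rw [two_smul]
    abel
  unfold rho
  rw [map_smul, hANS, smul_sub]
  congr 1
  rw [smul_smul]
  norm_num

lemma inner_rho_simple (h : IsRootSystem R Rpos Δ) {α : V} (hα : α ∈ Δ) :
    ⟪rho Rpos, α⟫ = ⟪α, α⟫ / 2 := by
  have hα0 : α ≠ 0 := h.nonzero α (h.pos_subset (h.simple_subset hα))
  have hαα : (0:ℝ) < ⟪α, α⟫ := inner_self_pos_of_ne hα0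
  have h1 := sref_rho h hα
  rw [sref_apply' hα0] at h1
  have h2 : (2 * ⟪rho Rpos, α⟫ / ⟪α, α⟫ - 1) • α = 0 := by
    have h4 : (2 * ⟪rho Rpos, α⟫ / ⟪α, α⟫) • α = α := sub_right_inj.1 h1
    rw [sub_smul, h4, one_smul, sub_self]
  rcases smul_eq_zero.1 h2 with hc | hc
  · have : 2 * ⟪rho Rpos, α⟫ / ⟪α, α⟫ = 1 := by linarith [hc]
    field_simp at this
    linarith
  · exact absurd hc hα0

lemma inner_rho_pos (h : IsRootSystem R Rpos Δ) {β : V} (hβ : β ∈ Rpos) :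
    0 < ⟪rho Rpos, β⟫ := by
  obtain ⟨c, hc0, hrep⟩ := h.simple_nonneg_comb β hβ
  obtain ⟨γ₀, hγ₀, hγpos⟩ := exists_pos_coeff h (h.pos_subset hβ) hc0 hrep
  rw [hrep, inner_sum]
  apply Finset.sum_pos'
  · intro γ hγ
    rw [real_inner_smul_right]
    have hγγ : (0:ℝ) < ⟪γ, γ⟫ :=
      inner_self_pos_of_ne (h.nonzero γ (h.pos_subset (h.simple_subset hγ)))
    have : 0 ≤ ⟪rho Rpos, γ⟫ := by rw [inner_rho_simple h hγ]; positivity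
    exact mul_nonneg (hc0 γ hγ) this
  · refine ⟨γ₀, hγ₀, ?_⟩
    rw [real_inner_smul_right, inner_rho_simple h hγ₀]
    have hγγ : (0:ℝ) < ⟪γ₀, γ₀⟫ :=
      inner_self_pos_of_ne (h.nonzero γ₀ (h.pos_subset (h.simple_subset hγ₀)))
    positivity

/-! ### generation by simple reflections -/

def simpleGens (Δ : Finset V) : Set (V ≃ₗᵢ[ℝ] V) := { g | ∃ γ ∈ Δ, g = sref γ }

lemma sref_mem_weyl (h : IsRootSystem R Rpos Δ) {α : V} (hα : α ∈ R) :
    sref α ∈ weylGroup R :=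
  Subgroup.subset_closure ⟨α, hα, rfl⟩

lemma simple_closure_le_weyl (h : IsRootSystem R Rpos Δ) :
    Subgroup.closure (simpleGens Δ) ≤ weylGroup R := by
  refine (Subgroup.closure_le _).2 ?_
  rintro g ⟨γ, hγ, rfl⟩
  exact sref_mem_weyl h (h.pos_subset (h.simple_subset hγ))

lemma gen_aux (h : IsRootSystem R Rpos Δ) :
    ∀ n : ℕ, ∀ α ∈ Rpos, ⟪rho Rpos, coroot α⟫ < n →
      sref α ∈ Subgroup.closure (simpleGens Δ) := by
  intro n
  induction n with
  | zero =>
    intro α hα habs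
    exfalso
    have hα0 : α ≠ 0 := h.nonzero α (h.pos_subset hα)
    have hαα : (0:ℝ) < ⟪α, α⟫ := inner_self_pos_of_ne hα0
    have : 0 < ⟪rho Rpos, coroot α⟫ := by
      rw [inner_coroot_eq]
      have hrp := inner_rho_pos h hα
      exact div_pos (by linarith) hαα
    simp at habs
    linarith
  | succ n ih =>
    intro α hαpos hbound
    by_cases hαΔ : α ∈ Δ
    · exact Subgroup.subset_closure ⟨α, hαΔ, rfl⟩
    · have hαR : α ∈ R := h.pos_subset hαpos
      have hα0 : α ≠ 0 := h.nonzero α hαR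
      have hαα : (0:ℝ) < ⟪α, α⟫ := inner_self_pos_of_ne hα0
      -- find a simple root pairing positively with α
      obtain ⟨c, hc0, hrep⟩ := h.simple_nonneg_comb α hαpos
      have hex : ∃ γ ∈ Δ, 0 < ⟪α, γ⟫ := by
        by_contra hcon
        push_neg at hcon
        have : ⟪α, α⟫ ≤ 0 := by
          nth_rewrite 2 [hrep]
          rw [inner_sum]
          apply Finset.sum_nonpos
          intro γ hγ
          rw [real_inner_smul_right]
          exact mul_nonpos_of_nonneg_of_nonpos (hc0 γ hγ) (hcon γ hγ)
        linarith
      obtain ⟨γ, hγΔ, hγpair⟩ := hex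
      have hγpos : γ ∈ Rpos := h.simple_subset hγΔ
      have hγR : γ ∈ R := h.pos_subset hγpos
      have hγ0 : γ ≠ 0 := h.nonzero γ hγR
      have hne : α ≠ γ := fun e => hαΔ (e ▸ hγΔ)
      -- reflected root
      set α' : V := sref γ α with hα'
      have hα'pos : α' ∈ Rpos := (sref_simple_perm h hγΔ hαpos hne).1
      -- the pairing ⟨γ, coroot α⟩ is a positive integer
      obtain ⟨N, hN⟩ := h.crystallographic α hαR γ hγR
      have hNpos : (0:ℝ) < N := by
        rw [← hN]
        have hc : 0 < ⟪γ, α⟫ := by rw [real_inner_comm]; exact hγpair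
        exact div_pos (by linarith) hαα
      have hN1 : (1:ℝ) ≤ N := by
        have : (0:ℤ) < N := by exact_mod_cast hNpos
        exact_mod_cast this
      -- height decreases
      have hdrop : ⟪rho Rpos, coroot α'⟫ = ⟪rho Rpos, coroot α⟫ - (2 * ⟪γ, α⟫ / ⟪α, α⟫) := by
        rw [hα', coroot_map, ← sref_selfadj, sref_rho h hγΔ]
        rw [inner_sub_left]
        congr 1
        rw [inner_coroot_eq]
      have hγcor : 2 * ⟪γ, α⟫ / ⟪α, α⟫ = (N:ℝ) := hN
      have hbound' : ⟪rho Rpos, coroot α'⟫ < n := by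
        rw [hdrop, hγcor]
        push_cast at hbound ⊢
        linarith
      have hmem' : sref α' ∈ Subgroup.closure (simpleGens Δ) := ih α' hα'pos hbound'
      have hγmem : sref γ ∈ Subgroup.closure (simpleGens Δ) :=
        Subgroup.subset_closure ⟨γ, hγΔ, rfl⟩
      have hα'0 : α' ≠ 0 := h.nonzero α' (h.pos_subset hα'pos)
      have hconj : sref α = sref γ * sref α' * sref γ := by
        have h1 : sref (sref γ α') = sref γ * sref α' * (sref γ)⁻¹ := sref_conj (sref γ) hα'0
        have h2 : sref γ α' = α := by rw [hα', sref_sref]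
        rw [h2] at h1
        rw [h1, sref_inv]
      rw [hconj]
      exact mul_mem (mul_mem hγmem hmem') hγmem

lemma weyl_le_simple_closure (h : IsRootSystem R Rpos Δ) :
    weylGroup R ≤ Subgroup.closure (simpleGens Δ) := by
  refine (Subgroup.closure_le _).2 ?_
  rintro g ⟨α, hαR, rfl⟩
  have key : ∀ β ∈ Rpos, sref β ∈ Subgroup.closure (simpleGens Δ) := by
    intro β hβ
    obtain ⟨n, hn⟩ := exists_nat_gt (⟪rho Rpos, coroot β⟫)
    exact gen_aux h n β hβ hn
  rcases h.pos_or_neg α hαR with hp | hn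
  · exact key α hp
  · rw [← sref_neg]
    exact key (-α) hn

lemma exists_word (h : IsRootSystem R Rpos Δ) {g : V ≃ₗᵢ[ℝ] V} (hg : g ∈ weylGroup R) :
    ∃ L : List V, (∀ γ ∈ L, γ ∈ Δ) ∧ g = (L.map sref).prod := by
  have hg' : g ∈ Subgroup.closure (simpleGens Δ) := weyl_le_simple_closure h hg
  clear hg
  induction hg' using Subgroup.closure_induction with
  | mem g hgmem =>
    obtain ⟨γ, hγ, rfl⟩ := hgmem
    exact ⟨[γ], by simpa using hγ, by simp⟩
  | one => exact ⟨[], by simp, by simp⟩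
  | mul a b _ _ iha ihb =>
    obtain ⟨La, hLa, rfl⟩ := iha
    obtain ⟨Lb, hLb, rfl⟩ := ihb
    refine ⟨La ++ Lb, ?_, by rw [List.map_append, List.prod_append]⟩
    intro γ hγ
    rcases List.mem_append.1 hγ with hh | hh
    · exact hLa γ hh
    · exact hLb γ hh
  | inv a _ iha =>
    obtain ⟨La, hLa, rfl⟩ := iha
    refine ⟨La.reverse, fun γ hγ => hLa γ (List.mem_reverse.1 hγ), ?_⟩
    have hinv : (La.map sref).map (fun x : V ≃ₗᵢ[ℝ] V => x⁻¹) = La.map sref := by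
      rw [List.map_map]
      apply List.map_congr_left
      intro γ _
      simp only [Function.comp_apply, sref_inv]
    calc ((La.map sref).prod)⁻¹
        = ((La.map sref).map (fun x => x⁻¹)).reverse.prod := List.prod_inv_reverse _
      _ = ((La.map sref).reverse).prod := by rw [hinv]
      _ = (La.reverse.map sref).prod := by rw [List.map_reverse]

lemma word_mem_weyl (h : IsRootSystem R Rpos Δ) {L : List V} (hL : ∀ γ ∈ L, γ ∈ Δ) :
    (L.map sref).prod ∈ weylGroup R := by
  induction L with
  | nil => simpa using one_mem _
  | cons γ L ih =>
    rw [List.map_cons, List.prod_cons]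
    exact mul_mem (sref_mem_weyl h (h.pos_subset (h.simple_subset (hL γ (by simp)))))
      (ih (fun γ' hγ' => hL γ' (by simp [hγ'])))

/-! ### the exchange argument -/

lemma exchange (h : IsRootSystem R Rpos Δ) :
    ∀ L : List V, (∀ γ ∈ L, γ ∈ Δ) → ∀ β ∈ Δ, ((L.map sref).prod) β ∉ Rpos →
      ∃ L' : List V, (∀ γ ∈ L', γ ∈ Δ) ∧ L'.length + 1 = L.length ∧
        (L.map sref).prod * sref β = (L'.map sref).prod := by
  intro L
  induction L with
  | nil =>
    intro _ β hβ habs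
    exfalso
    simp only [List.map_nil, List.prod_nil, LinearIsometryEquiv.coe_one, id] at habs
    exact habs (h.simple_subset hβ)
  | cons γ L ih =>
    intro hL β hβ hneg
    have hγΔ : γ ∈ Δ := hL γ (by simp)
    have hLtail : ∀ γ' ∈ L, γ' ∈ Δ := fun γ' hγ' => hL γ' (by simp [hγ'])
    set p := (L.map sref).prod with hpdef
    have hcons : ((γ :: L).map sref).prod = sref γ * p := by
      rw [List.map_cons, List.prod_cons]
    have happ : ((γ :: L).map sref).prod β = sref γ (p β) := by rw [hcons]; rfl
    have hβ0 : β ≠ 0 := h.nonzero β (h.pos_subset (h.simple_subset hβ))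
    by_cases hp : p β ∈ Rpos
    · have hpβγ : p β = γ := by
        by_contra hcon
        exact (hneg (happ ▸ (sref_simple_perm h hγΔ hp hcon).1))
      have hconj : sref γ = p * sref β * p⁻¹ := by
        rw [← hpβγ]
        exact sref_conj p hβ0
      refine ⟨L, hLtail, by simp, ?_⟩
      rw [hcons, hconj]
      calc p * sref β * p⁻¹ * p * sref β = p * (sref β * sref β) := by group
        _ = p := by rw [sref_mul_self, mul_one]
    · obtain ⟨L'', hΔ'', hlen'', heq''⟩ := ih hLtail β hβ hp
      refine ⟨γ :: L'', ?_, by simp [← hlen''], ?_⟩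
      · intro γ' hγ'
        rcases List.mem_cons.1 hγ' with rfl | hh
        · exact hγΔ
        · exact hΔ'' γ' hh
      · rw [hcons, mul_assoc, heq'', List.map_cons, List.prod_cons]

lemma eq_one_of_preserves_aux (h : IsRootSystem R Rpos Δ) :
    ∀ n : ℕ, ∀ L : List V, L.length ≤ n → (∀ γ ∈ L, γ ∈ Δ) →
      (∀ α ∈ Rpos, ((L.map sref).prod) α ∈ Rpos) → (L.map sref).prod = 1 := by
  intro n
  induction n with
  | zero =>
    intro L hlen _ _
    have : L = [] := List.eq_nil_of_length_eq_zero (by omega)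
    simp [this]
  | succ n ih =>
    intro L hlen hΔ hpres
    rcases List.eq_nil_or_concat L with rfl | ⟨L₀, β, rfl⟩
    · simp
    · simp only [List.concat_eq_append] at hlen hΔ hpres ⊢
      have hβΔ : β ∈ Δ := hΔ β (by simp)
      have hβpos : β ∈ Rpos := h.simple_subset hβΔ
      have hβ0 : β ≠ 0 := h.nonzero β (h.pos_subset hβpos)
      have hL₀ : ∀ γ ∈ L₀, γ ∈ Δ := fun γ hγ => hΔ γ (by simp [hγ])
      set p := (L₀.map sref).prod with hpdef
      have hg : ((L₀ ++ [β]).map sref).prod = p * sref β := by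
        rw [List.map_append, List.prod_append]
        simp [hpdef]
      have hgβpos : ((L₀ ++ [β]).map sref).prod β ∈ Rpos := hpres β hβpos
      have hpβ : p β ∉ Rpos := by
        have h1 : ((L₀ ++ [β]).map sref).prod β = p (sref β β) := by rw [hg]; rfl
        rw [sref_self hβ0] at h1
        have h2 : p (-β) = -(p β) := by rw [map_neg]
        rw [h2] at h1
        intro hcon
        have := h.not_both _ hcon
        rw [← h1] at this
        exact this hgβpos
      obtain ⟨L', hΔ', hlen', heq'⟩ := exchange h L₀ hL₀ β hβΔ hpβ
      have hgL' : ((L₀ ++ [β]).map sref).prod = (L'.map sref).prod := by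
        rw [hg, ← heq']
      rw [hgL']
      apply ih L' ?_ hΔ' ?_
      · have : (L₀ ++ [β]).length = L₀.length + 1 := by simp
        omega
      · intro α hα
        rw [← hgL']
        exact hpres α hα

lemma eq_one_of_preserves (h : IsRootSystem R Rpos Δ) {g : V ≃ₗᵢ[ℝ] V}
    (hg : g ∈ weylGroup R) (hpres : ∀ α ∈ Rpos, g α ∈ Rpos) : g = 1 := by
  obtain ⟨L, hL, rfl⟩ := exists_word h hg
  exact eq_one_of_preserves_aux h L.length L (le_refl _) hL hpres

lemma eq_one_of_fix_regular (h : IsRootSystem R Rpos Δ) {g : V ≃ₗᵢ[ℝ] V}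
    (hg : g ∈ weylGroup R) {x : V} (hx : ∀ α ∈ Rpos, 0 < ⟪x, α⟫) (hfix : g x = x) :
    g = 1 := by
  apply eq_one_of_preserves h hg
  intro α hα
  have hgαR : g α ∈ R := weyl_apply_mem h hg (h.pos_subset hα)
  rcases h.pos_or_neg _ hgαR with hp | hn
  · exact hp
  exfalso
  have h1 : ⟪x, α⟫ = ⟪x, g α⟫ := by
    conv_rhs => rw [← hfix]
    rw [g.inner_map_map]
  have h2 : ⟪x, g α⟫ = -⟪x, -(g α)⟫ := by
    rw [inner_neg_right]
    ring
  have h3 := hx _ hn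
  have h4 := hx _ hα
  rw [h1, h2] at h4
  linarith

/-! ### the rational cone -/

def inCone (Rpos : Finset V) (x : V) : Prop :=
  ∃ c : V → ℚ, (∀ β ∈ Rpos, 0 ≤ c β) ∧ x = ∑ β ∈ Rpos, (c β : ℝ) • coroot β

lemma cone_zero : inCone Rpos (0 : V) :=
  ⟨fun _ => 0, fun _ _ => le_refl _, by simp⟩

lemma cone_add {x y : V} (hx : inCone Rpos x) (hy : inCone Rpos y) : inCone Rpos (x + y) := by
  obtain ⟨c, hc0, rfl⟩ := hx
  obtain ⟨d, hd0, rfl⟩ := hy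
  refine ⟨fun β => c β + d β, fun β hβ => add_nonneg (hc0 β hβ) (hd0 β hβ), ?_⟩
  rw [← Finset.sum_add_distrib]
  congr 1
  ext β
  push_cast
  rw [add_smul]

lemma cone_smul {x : V} {q : ℚ} (hq : 0 ≤ q) (hx : inCone Rpos x) :
    inCone Rpos ((q : ℝ) • x) := by
  obtain ⟨c, hc0, rfl⟩ := hx
  refine ⟨fun β => q * c β, fun β hβ => mul_nonneg hq (hc0 β hβ), ?_⟩
  rw [Finset.smul_sum]
  congr 1
  ext β
  push_cast
  rw [smul_smul]

lemma cone_single {β : V} (hβ : β ∈ Rpos) {q : ℚ} (hq : 0 ≤ q) :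
    inCone Rpos ((q : ℝ) • coroot β) := by
  refine ⟨fun γ => if γ = β then q else 0, ?_, ?_⟩
  · intro γ _
    dsimp only
    split
    · exact hq
    · exact le_refl _
  · have : ∀ γ ∈ Rpos, ((if γ = β then q else 0 : ℚ) : ℝ) • coroot γ
        = (if γ = β then (q:ℝ) • coroot γ else 0) := by
      intro γ _
      split <;> simp
    rw [Finset.sum_congr rfl this, Finset.sum_ite_eq' Rpos β (fun γ => (q:ℝ) • coroot γ),
      if_pos hβ]

lemma cone_sum {ι : Type*} (s : Finset ι) (f : ι → V) (hf : ∀ i ∈ s, inCone Rpos (f i)) :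
    inCone Rpos (∑ i ∈ s, f i) := by
  classical
  induction s using Finset.induction_on with
  | empty => simpa using cone_zero
  | insert _ _ hnot ih =>
    rw [Finset.sum_insert hnot]
    exact cone_add (hf _ (Finset.mem_insert_self _ _))
      (ih (fun i hi => hf i (Finset.mem_insert_of_mem hi)))

/-! ### rationality of pairings for lattice points -/

lemma lattice_pairing_rat (h : IsRootSystem R Rpos Δ) {x : V} (hx : x ∈ corootLattice R)
    {α : V} (hα : α ∈ R) : ∃ q : ℚ, ⟪x, α⟫ = (q : ℝ) := by
  refine Submodule.span_induction ?_ ?_ ?_ ?_ hx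
  · rintro y ⟨β, hβ, rfl⟩
    have hβR : β ∈ R := hβ
    obtain ⟨n, hn⟩ := h.crystallographic β hβR α hα
    refine ⟨(n : ℚ), ?_⟩
    unfold coroot
    rw [real_inner_smul_left]
    have hcomm : ⟪β, α⟫ = ⟪α, β⟫ := real_inner_comm α β
    rw [hcomm]
    push_cast
    rw [← hn]
    ring
  · exact ⟨0, by simp⟩
  · rintro y z _ _ ⟨q1, hq1⟩ ⟨q2, hq2⟩
    exact ⟨q1 + q2, by rw [inner_add_left, hq1, hq2]; push_cast; ring⟩
  · rintro n y _ ⟨q, hq⟩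
    refine ⟨n * q, ?_⟩
    have : ((n : ℤ) • y : V) = (n : ℝ) • y := by
      rw [Int.cast_smul_eq_zsmul]
    rw [this, real_inner_smul_left, hq]
    push_cast
    ring

/-! ### the key dominance lemma -/

lemma dom_sub_cone_aux (h : IsRootSystem R Rpos Δ) {x : V} (hx : isDominant Rpos x)
    (hxq : ∀ α ∈ R, ∃ q : ℚ, ⟪x, α⟫ = (q : ℝ)) :
    ∀ n : ℕ, ∀ v ∈ weylGroup R, lenW Rpos v ≤ n → inCone Rpos (x - v x) := by
  have main : ∀ n : ℕ, (∀ k : ℕ, k < n → ∀ v ∈ weylGroup R, lenW Rpos v ≤ k →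
      inCone Rpos (x - v x)) → ∀ v ∈ weylGroup R, lenW Rpos v ≤ n →
      inCone Rpos (x - v x) := by
    intro n ih v hv hlen
    by_cases hall : ∀ α ∈ Δ, v α ∈ Rpos
    · -- v preserves all positive roots, hence v = 1
      have hpres : ∀ β ∈ Rpos, v β ∈ Rpos := by
        intro β hβ
        obtain ⟨c, hc0, hrep⟩ := h.simple_nonneg_comb β hβ
        have hvβ : v β = ∑ γ ∈ Δ, c γ • v γ := by
          rw [hrep, map_sum]
          congr 1
          ext γ
          rw [map_smul]
        have hNN : NN Δ (v β) := by
          rw [hvβ]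
          apply NN_sum
          intro γ hγ
          refine NN_smul (hc0 γ hγ) ?_
          obtain ⟨d, hd0, hdrep⟩ := h.simple_nonneg_comb _ (hall γ hγ)
          exact ⟨d, hd0, hdrep⟩
        exact mem_pos_of_NN h (weyl_apply_mem h hv (h.pos_subset hβ)) hNN
      have hv1 : v = 1 := eq_one_of_preserves h hv hpres
      rw [hv1]
      simpa using cone_zero
    · push_neg at hall
      obtain ⟨α, hαΔ, hvα⟩ := hall
      have hαpos : α ∈ Rpos := h.simple_subset hαΔ
      have hαR : α ∈ R := h.pos_subset hαpos
      have hα0 : α ≠ 0 := h.nonzero α hαR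
      have hαα : (0:ℝ) < ⟪α, α⟫ := inner_self_pos_of_ne hα0
      set v' := v * sref α with hv'def
      have hv' : v' ∈ weylGroup R := mul_mem hv (sref_mem_weyl h hαR)
      have hvv' : v = v' * sref α := by
        rw [hv'def, mul_assoc, sref_mul_self, mul_one]
      have hv'α : v' α ∈ Rpos := by
        have h1 : v' α = -(v α) := by
          rw [hv'def]
          show v (sref α α) = -(v α)
          rw [sref_self hα0, map_neg]
        rw [h1]
        have hvαR : v α ∈ R := weyl_apply_mem h hv hαR
        rcases h.pos_or_neg _ hvαR with hp | hn
        · exact absurd hp hvα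
        · exact hn
      -- the length decreases
      have hα_in : α ∈ Rpos.filter (fun β => v β ∉ Rpos) := by
        rw [Finset.mem_filter]
        exact ⟨hαpos, hvα⟩
      have hcard : (Rpos.filter (fun β => v' β ∉ Rpos)).card
          = ((Rpos.filter (fun β => v β ∉ Rpos)).erase α).card := by
        refine Finset.card_bij' (fun β _ => sref α β) (fun β _ => sref α β) ?_ ?_ ?_ ?_
        · intro β hβ
          rw [Finset.mem_filter] at hβ
          obtain ⟨hβpos, hβv'⟩ := hβ
          have hβα : β ≠ α := by
            rintro rfl
            exact hβv' hv'α
          have hperm := sref_simple_perm h hαΔ hβpos hβα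
          rw [Finset.mem_erase, Finset.mem_filter]
          refine ⟨hperm.2, hperm.1, ?_⟩
          have he : v (sref α β) = v' β := by
            rw [hvv']
            show v' (sref α (sref α β)) = v' β
            rw [sref_sref]
          rw [he]
          exact hβv'
        · intro β hβ
          rw [Finset.mem_erase, Finset.mem_filter] at hβ
          obtain ⟨hβα, hβpos, hβv⟩ := hβ
          have hperm := sref_simple_perm h hαΔ hβpos hβα
          have he : v' (sref α β) = v β := by
            rw [hv'def]
            show v (sref α (sref α β)) = v β
            rw [sref_sref]
          rw [Finset.mem_filter]
          refine ⟨hperm.1, ?_⟩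
          rw [he]
          exact hβv
        · intro β _; exact sref_sref α β
        · intro β _; exact sref_sref α β
      have hpos_card : 0 < (Rpos.filter (fun β => v β ∉ Rpos)).card :=
        Finset.card_pos.2 ⟨α, hα_in⟩
      have hlen' : lenW Rpos v' + 1 = lenW Rpos v := by
        have e1 : lenW Rpos v' = ((Rpos.filter (fun β => v β ∉ Rpos)).erase α).card := hcard
        have e2 : lenW Rpos v = (Rpos.filter (fun β => v β ∉ Rpos)).card := rfl
        rw [e1, e2, Finset.card_erase_of_mem hα_in]
        omega
      -- induction hypothesis applies to v'
      have hcone' : inCone Rpos (x - v' x) := by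
        refine ih (lenW Rpos v') ?_ v' hv' (le_refl _)
        omega
      -- the extra term
      obtain ⟨q, hq⟩ := hxq α hαR
      have hq0 : 0 ≤ q := by
        have := hx α hαpos
        rw [hq] at this
        exact_mod_cast this
      have hdecomp : x - v x = (x - v' x) + (q : ℝ) • coroot (v' α) := by
        have hvx : v x = v' x - (2 * ⟪x, α⟫ / ⟪α, α⟫) • v' α := by
          rw [hvv']
          show v' (sref α x) = _
          rw [sref_apply' hα0, map_sub, map_smul]
        have hcor : coroot (v' α) = (2 / ⟪α, α⟫) • (v' α) := by
          unfold coroot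
          rw [v'.inner_map_map α α]
        rw [hvx, hcor, hq, smul_smul]
        have hsc : 2 * (q:ℝ) / ⟪α, α⟫ = (q:ℝ) * (2 / ⟪α, α⟫) := by ring
        rw [hsc]
        abel
      rw [hdecomp]
      exact cone_add hcone' (cone_single hv'α hq0)
  intro n
  induction n using Nat.strong_induction_on with
  | _ n ih => exact main n ih

lemma dom_sub_cone (h : IsRootSystem R Rpos Δ) {x : V} (hx : isDominant Rpos x)
    (hxq : ∀ α ∈ R, ∃ q : ℚ, ⟪x, α⟫ = (q : ℝ)) {v : V ≃ₗᵢ[ℝ] V} (hv : v ∈ weylGroup R) :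
    inCone Rpos (x - v x) :=
  dom_sub_cone_aux h hx hxq (lenW Rpos v) v hv (le_refl _)


theorem stmt_5 (R Rpos Δ : Finset V) (h : IsRootSystem R Rpos Δ)
    (lam : V) (hlat : lam ∈ corootLattice R) (hreg : ∀ α ∈ R, ⟪lam, α⟫ ≠ 0)
    (w : V ≃ₗᵢ[ℝ] V) (hw : w ∈ weylGroup R) (hw1 : w ≠ 1)
    (m : ℕ) (hm : orderOf w = m)
    (ν : V) (hνdom : isDominant Rpos ν)
    (u : V ≃ₗᵢ[ℝ] V) (hu : u ∈ weylGroup R)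
    (hν : ν = u ((m : ℝ)⁻¹ • ∑ i ∈ Finset.range m, (w ^ (i + 1)) lam))
    (lamp : V) (hpd : isDominant Rpos lamp)
    (u' : V ≃ₗᵢ[ℝ] V) (hu' : u' ∈ weylGroup R) (hp : lamp = u' lam) :
    domLE Rpos ν lamp ∧ ν ≠ lamp := by
  -- the order m is at least 2
  have hfin : IsOfFinOrder w := weyl_finOrder h hw
  have hm0 : m ≠ 0 := by
    rw [← hm]
    exact (hfin.orderOf_pos).ne'
  have hm1 : m ≠ 1 := by
    rw [← hm]
    intro e
    exact hw1 (orderOf_eq_one_iff.1 e)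
  have hm2 : 2 ≤ m := by omega
  have hmR : (m : ℝ) ≠ 0 := Nat.cast_ne_zero.2 hm0
  have hu'inv : u'⁻¹ ∈ weylGroup R := inv_mem hu'
  -- pairings of lamp with roots: rational and (on positives) strictly positive
  have hlamp_pair : ∀ α ∈ R, ⟪lamp, α⟫ = ⟪lam, u'⁻¹ α⟫ := by
    intro α hα
    rw [hp]
    conv_lhs => rw [show α = u' (u'⁻¹ α) by simp]
    rw [u'.inner_map_map]
  have hlampq : ∀ α ∈ R, ∃ q : ℚ, ⟪lamp, α⟫ = (q : ℝ) := by
    intro α hα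
    rw [hlamp_pair α hα]
    exact lattice_pairing_rat h hlat (weyl_apply_mem h hu'inv hα)
  have hlamppos : ∀ α ∈ Rpos, 0 < ⟪lamp, α⟫ := by
    intro α hα
    have hne : ⟪lamp, α⟫ ≠ 0 := by
      rw [hlamp_pair α (h.pos_subset hα)]
      exact hreg _ (weyl_apply_mem h hu'inv (h.pos_subset hα))
    exact lt_of_le_of_ne (hpd α hα) (Ne.symm hne)
  -- notation for the averaged sum
  set s : V := ∑ i ∈ Finset.range m, (w ^ (i + 1)) lam with hs
  have hνs : ν = u ((m : ℝ)⁻¹ • s) := hν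
  have hus : u s = ∑ i ∈ Finset.range m, u ((w ^ (i + 1)) lam) := by
    rw [hs]
    exact map_sum u.toLinearEquiv _ _
  -- the conjugated group elements
  set vv : ℕ → (V ≃ₗᵢ[ℝ] V) := fun i => u * w ^ (i + 1) * u'⁻¹ with hvv
  have hvvmem : ∀ i : ℕ, vv i ∈ weylGroup R := fun i =>
    mul_mem (mul_mem hu (pow_mem hw _)) (inv_mem hu')
  have hvlamp : ∀ i : ℕ, vv i lamp = u ((w ^ (i + 1)) lam) := by
    intro i
    rw [hp, hvv]
    show u ((w ^ (i + 1)) (u'⁻¹ (u' lam))) = u ((w ^ (i + 1)) lam)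
    congr 2
    simp
  -- Part 1 : the dominance order inequality
  have hkey : lamp - ν = (m : ℝ)⁻¹ • ∑ i ∈ Finset.range m, (lamp - vv i lamp) := by
    have h1 : ∑ i ∈ Finset.range m, (lamp - vv i lamp)
        = (m : ℝ) • lamp - u s := by
      rw [Finset.sum_sub_distrib]
      congr 1
      · rw [Finset.sum_const, Finset.card_range]
        rw [← Nat.cast_smul_eq_nsmul ℝ]
      · rw [hus]
        congr 1
        ext i
        rw [hvlamp i]
    rw [h1, smul_sub, smul_smul, inv_mul_cancel₀ hmR, one_smul, hνs, map_smul]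
  have hcone : inCone Rpos (lamp - ν) := by
    rw [hkey]
    have hq0 : (0:ℚ) ≤ (m:ℚ)⁻¹ := by positivity
    have hcast : (Rat.cast ((m:ℚ)⁻¹) : ℝ) = (m : ℝ)⁻¹ := by push_cast; ring
    rw [← hcast]
    exact cone_smul hq0 (cone_sum _ _ (fun i _ => dom_sub_cone h hpd hlampq (hvvmem i)))
  refine ⟨hcone, ?_⟩
  -- Part 2 : strictness
  intro hcontra
  have hnorm : ∀ i : ℕ, ‖u ((w ^ (i + 1)) lam)‖ = ‖lamp‖ := by
    intro i
    rw [hp]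
    simp
  have hinner_le : ∀ i ∈ Finset.range m, ⟪lamp, u ((w ^ (i + 1)) lam)⟫ ≤ ‖lamp‖ ^ 2 := by
    intro i _
    calc ⟪lamp, u ((w ^ (i + 1)) lam)⟫ ≤ ‖lamp‖ * ‖u ((w ^ (i + 1)) lam)‖ :=
          real_inner_le_norm _ _
      _ = ‖lamp‖ ^ 2 := by rw [hnorm i]; ring
  have hsum_eq : ∑ i ∈ Finset.range m, ⟪lamp, u ((w ^ (i + 1)) lam)⟫ = m * ‖lamp‖ ^ 2 := by
    have h1 : ⟪lamp, ν⟫ = ‖lamp‖ ^ 2 := by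
      rw [hcontra]
      exact real_inner_self_eq_norm_sq lamp
    have h2 : ⟪lamp, ν⟫ = (m : ℝ)⁻¹ * ∑ i ∈ Finset.range m, ⟪lamp, u ((w ^ (i + 1)) lam)⟫ := by
      rw [hνs, map_smul, real_inner_smul_right, hus, inner_sum]
    rw [h1] at h2
    field_simp at h2
    linarith
  have hgs : ∑ _i ∈ Finset.range m, ‖lamp‖ ^ 2 = m * ‖lamp‖ ^ 2 := by
    rw [Finset.sum_const, Finset.card_range, nsmul_eq_mul]
  have hall := (Finset.sum_eq_sum_iff_of_le hinner_le).1 (by rw [hsum_eq, hgs])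
  have heq : ∀ i ∈ Finset.range m, u ((w ^ (i + 1)) lam) = lamp := by
    intro i hi
    have h5 : ‖lamp - u ((w ^ (i + 1)) lam)‖ ^ 2 = 0 := by
      rw [norm_sub_sq_real, hall i hi, hnorm i]
      ring
    have h6 : lamp - u ((w ^ (i + 1)) lam) = 0 := by
      have := pow_eq_zero_iff (n := 2) (by norm_num) |>.1 h5
      exact norm_eq_zero.1 this
    have := sub_eq_zero.1 h6
    exact this.symm
  have h01 := heq 0 (Finset.mem_range.2 (by omega))
  have h11 := heq 1 (Finset.mem_range.2 (by omega))
  have hw12 : (w ^ (0 + 1)) lam = (w ^ (1 + 1)) lam := u.injective (h01.trans h11.symm)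
  have hwfix : w lam = lam := by
    have e1 : (w ^ (0 + 1)) lam = w lam := by norm_num
    have e2 : (w ^ (1 + 1)) lam = w (w lam) := by
      rw [show (1 + 1 : ℕ) = 2 by rfl, pow_two]
      rfl
    rw [e1, e2] at hw12
    exact (w.injective hw12).symm
  set g := u' * w * u'⁻¹ with hg
  have hgmem : g ∈ weylGroup R := mul_mem (mul_mem hu' hw) (inv_mem hu')
  have hgfix : g lamp = lamp := by
    rw [hp, hg]
    show u' (w (u'⁻¹ (u' lam))) = u' lam
    congr 1
    rw [show u'⁻¹ (u' lam) = lam by simp]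
    exact hwfix
  have hg1 : g = 1 := eq_one_of_fix_regular h hgmem hlamppos hgfix
  have hwone : w = 1 := by
    have e3 : w = u'⁻¹ * g * u' := by rw [hg]; group
    rw [hg1] at e3
    rw [e3]
    group
  exact hw1 hwone
end
end

section
/- Let λ be a dominant coroot, α_i a simple root, and set ν_i = λ − (⟨λ, α_i⟩/2) α_i^∨, the orthogonal projection of λ onto the hyperplane H_{α_i}. Suppose ν is any dominant element with ν ≤ λ in dominance order and ⟨ν, α_i⟩ = 0. Then ν ≤ ν_i in dominance order. -/
noncomputable section

open scoped Classical
open scoped RealInnerProductSpace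
open Finset

variable {V : Type*} [NormedAddCommGroup V] [InnerProductSpace ℝ V] [FiniteDimensional ℝ V]

theorem inner_self_pos' {x : V} (hx : x ≠ 0) : (0:ℝ) < ⟪x, x⟫ := by
  rw [real_inner_self_eq_norm_sq]
  exact pow_pos (norm_pos_iff.2 hx) 2

/-- Coefficient extraction from linear independence of simple roots. -/
theorem coeff_zero_of_sum_eq_zero {R Rpos Δ : Finset V} (h : IsRootSystem R Rpos Δ)
    (f : V → ℝ) (hf : ∑ δ ∈ Δ, f δ • δ = 0) : ∀ δ ∈ Δ, f δ = 0 := by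
  classical
  have hind := h.simple_indep
  rw [Fintype.linearIndependent_iff] at hind
  intro δ hδ
  have h0 : ∑ i : (Δ : Set V), f i • (i : V) = 0 := by
    rw [← hf]; exact Finset.sum_finset_coe (fun v => f v • v) Δ
  exact hind (fun i => f i) h0 ⟨δ, hδ⟩

/-- If a positive root equals a linear combination of simple roots, the coefficients are
nonnegative. -/
theorem coeff_nonneg_of_pos {R Rpos Δ : Finset V} (h : IsRootSystem R Rpos Δ)
    {x : V} (hx : x ∈ Rpos) (f : V → ℝ) (hf : x = ∑ δ ∈ Δ, f δ • δ) :
    ∀ δ ∈ Δ, 0 ≤ f δ := by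
  classical
  obtain ⟨e, he0, heq⟩ := h.simple_nonneg_comb x hx
  have hzero : ∑ δ ∈ Δ, (f δ - e δ) • δ = 0 := by
    simp only [sub_smul, Finset.sum_sub_distrib, ← hf, ← heq, sub_self]
  intro δ hδ
  have := coeff_zero_of_sum_eq_zero h _ hzero δ hδ
  have h2 := he0 δ hδ
  linarith

/-- Distinct simple roots pair nonpositively. -/
theorem simple_inner_nonpos {R Rpos Δ : Finset V} (h : IsRootSystem R Rpos Δ)
    {α β : V} (hα : α ∈ Δ) (hβ : β ∈ Δ) (hne : α ≠ β) : ⟪α, β⟫ ≤ 0 := by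
  classical
  by_contra hpos
  push_neg at hpos
  have hαR : α ∈ R := h.pos_subset (h.simple_subset hα)
  have hβR : β ∈ R := h.pos_subset (h.simple_subset hβ)
  have hββ : (0:ℝ) < ⟪β, β⟫ := inner_self_pos' (h.nonzero β hβR)
  set c : ℝ := 2 * ⟪α, β⟫ / ⟪β, β⟫ with hc
  have hcpos : 0 < c := div_pos (by linarith) hββ
  have hγR : α - c • β ∈ R := h.reflect_mem β hβR α hαR
  have hsum : ∀ (a b : ℝ), ∑ δ ∈ Δ, ((if δ = α then a else 0) + (if δ = β then b else 0)) • δ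
      = a • α + b • β := by
    intro a b
    simp only [add_smul, Finset.sum_add_distrib, ite_smul, zero_smul]
    rw [Finset.sum_ite_eq' Δ α (fun δ => a • δ), Finset.sum_ite_eq' Δ β (fun δ => b • δ),
      if_pos hα, if_pos hβ]
  rcases h.pos_or_neg _ hγR with hp | hp
  · have := coeff_nonneg_of_pos h hp
      (fun δ => (if δ = α then (1:ℝ) else 0) + (if δ = β then -c else 0)) ?_ β hβ
    · simp only [if_neg (Ne.symm hne), if_pos rfl, if_true, zero_add] at this
      linarith
    · rw [hsum 1 (-c), one_smul, neg_smul, ← sub_eq_add_neg]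
  · have := coeff_nonneg_of_pos h hp
      (fun δ => (if δ = α then (-1:ℝ) else 0) + (if δ = β then c else 0)) ?_ α hα
    · simp only [if_pos rfl, if_true, if_neg hne, add_zero] at this
      linarith
    · rw [hsum (-1) c, neg_smul, one_smul, neg_sub]
      abel
theorem stmt_10 (R Rpos Δ : Finset V) (h : IsRootSystem R Rpos Δ)
    (lam : V) (hlat : lam ∈ corootLattice R) (hdom : isDominant Rpos lam)
    (αi : V) (hi : αi ∈ Δ)
    (ν : V) (hν : isDominant Rpos ν) (hle : domLE Δ ν lam) (hperp : ⟪ν, αi⟫ = 0) :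
    domLE Δ ν (lam - (⟪lam, αi⟫ / 2) • coroot αi) := by
  classical
  obtain ⟨c, hc0, hceq⟩ := hle
  have hΔR : ∀ β ∈ Δ, β ∈ R := fun β hβ => h.pos_subset (h.simple_subset hβ)
  have hαiR : αi ∈ R := hΔR αi hi
  -- the Cartan integers ⟪coroot β, αi⟫ as rationals
  set n : V → ℚ := fun β =>
    if hβ : β ∈ R then ((h.crystallographic β hβ αi hαiR).choose : ℚ) else 0 with hn
  have hspec : ∀ β ∈ Δ, ⟪coroot β, αi⟫ = ((n β : ℚ) : ℝ) := by
    intro β hβ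
    have hβR := hΔR β hβ
    have hs := (h.crystallographic β hβR αi hαiR).choose_spec
    have hnβ : ((n β : ℚ) : ℝ) = 2 * ⟪αi, β⟫ / ⟪β, β⟫ := by
      simp only [hn, dif_pos hβR]
      exact_mod_cast hs.symm
    rw [hnβ, coroot, real_inner_smul_left, real_inner_comm β αi]
    ring
  have hβββ : ∀ β ∈ Δ, (0:ℝ) < ⟪β, β⟫ := fun β hβ =>
    inner_self_pos' (h.nonzero β (hΔR β hβ))
  have hnαi : n αi = 2 := by
    have h2 : ⟪coroot αi, αi⟫ = 2 := by
      rw [coroot, real_inner_smul_left]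
      field_simp [ne_of_gt (hβββ αi hi)]
      exact div_self (hβββ αi hi).ne'
    have h3 : ((n αi : ℚ) : ℝ) = 2 := by rw [← hspec αi hi, h2]
    exact_mod_cast h3
  have hnle : ∀ β ∈ Δ, β ≠ αi → n β ≤ 0 := by
    intro β hβ hne
    have h1 : ⟪β, αi⟫ ≤ 0 := simple_inner_nonpos h hβ hi hne
    have h2 : ⟪coroot β, αi⟫ ≤ 0 := by
      rw [coroot, real_inner_smul_left]
      have := hβββ β hβ
      have h4 : (0:ℝ) ≤ 2 / ⟪β, β⟫ := by positivity
      exact mul_nonpos_of_nonneg_of_nonpos h4 h1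
    have h3 : ((n β : ℚ) : ℝ) ≤ 0 := (hspec β hβ) ▸ h2
    exact_mod_cast h3
  -- pairing of lam with αi
  have hlam : ⟪lam, αi⟫ = ∑ β ∈ Δ, (c β : ℝ) * ((n β : ℚ) : ℝ) := by
    have h1 : ⟪lam, αi⟫ = ⟪lam - ν, αi⟫ := by rw [inner_sub_left, hperp]; ring
    rw [h1, hceq, sum_inner]
    refine Finset.sum_congr rfl fun β hβ => ?_
    rw [real_inner_smul_left, hspec β hβ]
  set S : ℚ := ∑ β ∈ Δ, c β * n β / 2 with hS
  have hScast : ((S : ℚ) : ℝ) = ⟪lam, αi⟫ / 2 := by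
    rw [hS]
    push_cast
    rw [hlam, Finset.sum_div]
  refine ⟨fun γ => if γ = αi then c αi - S else c γ, ?_, ?_⟩
  · intro β hβ
    by_cases hb : β = αi
    · subst hb
      simp only [if_pos rfl, if_true]
      have hsplit : S = (∑ γ ∈ Δ.erase β, c γ * n γ / 2) + c β * n β / 2 := by
        rw [hS, Finset.sum_erase_add Δ _ hβ]
      have hterm : ∑ γ ∈ Δ.erase β, c γ * n γ / 2 ≤ 0 := by
        apply Finset.sum_nonpos
        intro γ hγ'
        have hγΔ := Finset.mem_of_mem_erase hγ'
        have hne := Finset.ne_of_mem_erase hγ'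
        have := mul_nonpos_of_nonneg_of_nonpos (hc0 γ hγΔ) (hnle γ hγΔ hne)
        linarith
      rw [hnαi] at hsplit
      have : S ≤ c β := by rw [hsplit]; linarith
      linarith
    · simp only [if_neg hb]; exact hc0 β hβ
  · have hrhs : ∑ β ∈ Δ, (((if β = αi then c αi - S else c β : ℚ)) : ℝ) • coroot β
        = (∑ β ∈ Δ.erase αi, (c β : ℝ) • coroot β) + ((c αi - S : ℚ) : ℝ) • coroot αi := by
      rw [← Finset.sum_erase_add Δ _ hi]
      simp only [if_pos rfl, if_true]
      congr 1
      refine Finset.sum_congr rfl fun β hβ => ?_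
      rw [if_neg (Finset.ne_of_mem_erase hβ)]
    have hlhs : lam - ν = (∑ β ∈ Δ.erase αi, (c β : ℝ) • coroot β) + (c αi : ℝ) • coroot αi := by
      rw [hceq, Finset.sum_erase_add Δ _ hi]
    rw [hrhs, sub_right_comm, hlhs]
    have hco : ((c αi - S : ℚ) : ℝ) = (c αi : ℝ) - ⟪lam, αi⟫ / 2 := by
      push_cast
      rw [← hScast]
    rw [hco, sub_smul]
    abel
end
end

section
/- Let x = t^{λ} w in the affine Weyl group with λ dominant and w ≠ 1 of order m. Then there exists a simple reflection s_i such that λ ≥ ν(t^{λ}s_i) ≥ ν(x) in dominance order, where ν(t^{λ}s_i) = λ − (⟨λ, α_i⟩/2)α_i^∨ and ν(x) is the dominant representative of (1/m)∑_{k=1}^m w^k(λ). -/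
noncomputable section

open scoped Classical
open scoped RealInnerProductSpace
open Finset

variable {V : Type*} [NormedAddCommGroup V] [InnerProductSpace ℝ V] [FiniteDimensional ℝ V]

set_option linter.unusedSectionVars false
set_option maxHeartbeats 1000000

namespace Stmt12

lemma iself_pos {α : V} (hα : α ≠ 0) : 0 < ⟪α, α⟫ := by
  have h1 : ⟪α, α⟫ ≠ 0 := fun e => hα (inner_self_eq_zero.1 e)
  exact lt_of_le_of_ne real_inner_self_nonneg (Ne.symm h1)

lemma sref_apply2 (α v : V) : sref α v = v - (2 * ⟪v, α⟫ / ⟪α, α⟫) • α := by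
  rcases eq_or_ne α 0 with rfl | hα
  · simp only [sref, inner_zero_right, mul_zero, zero_div, zero_smul, sub_zero]
    refine (Submodule.reflection_eq_self_iff v).2 ?_
    rw [Submodule.mem_orthogonal]
    intro y hy
    rcases Submodule.mem_span_singleton.1 hy with ⟨c, rfl⟩
    simp
  · rw [sref, Submodule.reflection_orthogonal_apply, Submodule.reflection_singleton_apply]
    have hn : (RCLike.ofReal ‖α‖ : ℝ) ^ 2 = ⟪α, α⟫ := by
      simp [RCLike.ofReal_real_eq_id]
    rw [hn, real_inner_comm α v, two_smul]
    rw [show (2 : ℝ) * ⟪α, v⟫ / ⟪α, α⟫ = ⟪α, v⟫ / ⟪α, α⟫ + ⟪α, v⟫ / ⟪α, α⟫ by ring]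
    module

lemma sref_self (α : V) : sref α α = -α := by
  rcases eq_or_ne α 0 with rfl | hα
  · simp [sref_apply2]
  · have h0 : ⟪α, α⟫ ≠ 0 := ne_of_gt (iself_pos hα)
    rw [sref_apply2, mul_div_assoc, div_self h0]
    module

lemma sref_inv (α : V) : (sref α)⁻¹ = sref α := by
  ext v
  show (sref α).symm v = _
  rw [sref, Submodule.reflection_symm]

lemma sref_sref (α v : V) : sref α (sref α v) = v := Submodule.reflection_reflection _ v

lemma mul_apply (g h : V ≃ₗᵢ[ℝ] V) (v : V) : (g * h) v = g (h v) := rfl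

lemma inv_apply_eq (g : V ≃ₗᵢ[ℝ] V) (v : V) : g (g⁻¹ v) = v := by
  have : (g * g⁻¹) v = v := by simp
  simpa [mul_apply] using this

lemma inv_apply_eq' (g : V ≃ₗᵢ[ℝ] V) (v : V) : g⁻¹ (g v) = v := by
  have : (g⁻¹ * g) v = v := by simp
  simpa [mul_apply] using this

lemma inner_g (g : V ≃ₗᵢ[ℝ] V) (x y : V) : ⟪g x, g y⟫ = ⟪x, y⟫ :=
  LinearIsometryEquiv.inner_map_map g x y

lemma inner_g_inv (g : V ≃ₗᵢ[ℝ] V) (x y : V) : ⟪g⁻¹ x, y⟫ = ⟪x, g y⟫ := by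
  rw [← inner_g g (g⁻¹ x) y, inv_apply_eq]

lemma sref_conj (g : V ≃ₗᵢ[ℝ] V) (α : V) : sref (g α) = g * sref α * g⁻¹ := by
  ext v
  rw [mul_apply, mul_apply, sref_apply2, sref_apply2, map_sub, map_smul, inv_apply_eq,
    inner_g_inv, inner_g g α α]

lemma sref_neg (α : V) : sref (-α) = sref α := by
  ext v
  rw [sref_apply2, sref_apply2, inner_neg_neg, inner_neg_right]
  module

section withRS

variable {R Rpos Δ : Finset V}

lemma sref_mem_weyl {α : V} (hα : α ∈ R) : sref α ∈ weylGroup R :=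
  Subgroup.subset_closure ⟨α, hα, rfl⟩

lemma weyl_root_mem' (h : IsRootSystem R Rpos Δ) {g : V ≃ₗᵢ[ℝ] V} (hg : g ∈ weylGroup R) :
    (∀ α ∈ R, g α ∈ R) ∧ (∀ α ∈ R, g⁻¹ α ∈ R) := by
  induction hg using Subgroup.closure_induction with
  | mem x hx =>
      obtain ⟨α, hαR, rfl⟩ := hx
      have hfwd : ∀ β ∈ R, sref α β ∈ R := by
        intro β hβ
        rw [sref_apply2]
        exact h.reflect_mem α hαR β hβ
      exact ⟨hfwd, by rw [sref_inv]; exact hfwd⟩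
  | one => constructor <;> intro α hα <;> simpa using hα
  | mul x y hx hy ihx ihy =>
      constructor
      · intro α hα
        exact ihx.1 _ (ihy.1 α hα)
      · intro α hα
        rw [mul_inv_rev]
        exact ihy.2 _ (ihx.2 α hα)
  | inv x hx ih =>
      exact ⟨ih.2, by simpa [inv_inv] using ih.1⟩

lemma weyl_root (h : IsRootSystem R Rpos Δ) {g : V ≃ₗᵢ[ℝ] V} (hg : g ∈ weylGroup R)
    {α : V} (hα : α ∈ R) : g α ∈ R := (weyl_root_mem' h hg).1 α hα

lemma indep' (h : IsRootSystem R Rpos Δ) (c : V → ℝ) (hc : ∑ β ∈ Δ, c β • β = 0) :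
    ∀ β ∈ Δ, c β = 0 := by
  have li := h.simple_indep
  rw [Fintype.linearIndependent_iff] at li
  have e : ∑ i : (Δ : Set V), c i • (i : V) = 0 := by
    rw [Finset.sum_finset_coe (fun β => c β • β) Δ]
    exact hc
  intro β hβ
  exact li (fun i => c (i : V)) e ⟨β, Finset.mem_coe.2 hβ⟩

lemma exists_pos_coeff (h : IsRootSystem R Rpos Δ) {α : V} (hne : α ≠ 0) (c : V → ℝ)
    (hc0 : ∀ β ∈ Δ, 0 ≤ c β) (hsum : α = ∑ β ∈ Δ, c β • β) :
    ∃ β ∈ Δ, 0 < c β := by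
  by_contra hcon
  push_neg at hcon
  apply hne
  rw [hsum]
  refine Finset.sum_eq_zero fun β hβ => ?_
  rw [le_antisymm (hcon β hβ) (hc0 β hβ), zero_smul]

lemma sref_simple_perm (h : IsRootSystem R Rpos Δ) {β γ : V} (hβ : β ∈ Δ) (hγ : γ ∈ Rpos)
    (hne : γ ≠ β) : sref β γ ∈ Rpos := by
  have hβR : β ∈ R := h.pos_subset (h.simple_subset hβ)
  have hγR : γ ∈ R := h.pos_subset hγ
  have hδR : sref β γ ∈ R := by rw [sref_apply2]; exact h.reflect_mem β hβR γ hγR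
  obtain ⟨c, hc0, hcsum⟩ := h.simple_nonneg_comb γ hγ
  have hμ : ∃ μ ∈ Δ, μ ≠ β ∧ 0 < c μ := by
    by_contra hcon
    push_neg at hcon
    have hγβ : γ = c β • β := by
      rw [hcsum]
      refine Finset.sum_eq_single_of_mem β hβ fun μ hμΔ hμβ => ?_
      have : c μ = 0 := by
        rcases eq_or_lt_of_le (hc0 μ hμΔ) with h' | h'
        · exact h'.symm
        · exact absurd h' (by simpa using fun hh => (hcon μ hμΔ hμβ).not_gt hh)
      rw [this, zero_smul]
    rcases h.reduced β hβR (c β) (hγβ ▸ hγR) with h1 | h1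
    · exact hne (by rw [hγβ, h1, one_smul])
    · have : γ = -β := by rw [hγβ, h1]; module
      exact h.not_both β (h.simple_subset hβ) (this ▸ hγ)
  obtain ⟨μ, hμΔ, hμβ, hcμ⟩ := hμ
  by_contra hnot
  have hnegpos : -(sref β γ) ∈ Rpos := (h.pos_or_neg _ hδR).resolve_left hnot
  obtain ⟨d, hd0, hdsum⟩ := h.simple_nonneg_comb _ hnegpos
  set t : ℝ := 2 * ⟪γ, β⟫ / ⟪β, β⟫ with ht
  have hzero : ∑ μ' ∈ Δ, (c μ' + d μ' - (if μ' = β then t else 0)) • μ' = 0 := by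
    have e1 : ∑ μ' ∈ Δ, (if μ' = β then t else 0) • μ' = t • β := by
      have estep : ∀ μ' ∈ Δ, (if μ' = β then t else 0) • μ' = if μ' = β then t • β else 0 := by
        intro μ' _
        split_ifs with hh
        · rw [hh]
        · rw [zero_smul]
      rw [Finset.sum_congr rfl estep, Finset.sum_ite_eq' Δ β (fun _ => t • β)]
      simp [hβ]
    have e2 : ∑ μ' ∈ Δ, d μ' • μ' = t • β - γ := by
      rw [← hdsum, sref_apply2]; module
    calc ∑ μ' ∈ Δ, (c μ' + d μ' - (if μ' = β then t else 0)) • μ'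
        = (∑ μ' ∈ Δ, c μ' • μ') + (∑ μ' ∈ Δ, d μ' • μ')
          - ∑ μ' ∈ Δ, (if μ' = β then t else 0) • μ' := by
          rw [← Finset.sum_add_distrib, ← Finset.sum_sub_distrib]
          exact Finset.sum_congr rfl fun μ' _ => by module
      _ = 0 := by rw [← hcsum, e2, e1]; abel
  have := indep' h _ hzero μ hμΔ
  rw [if_neg hμβ, sub_zero] at this
  have : c μ + d μ > 0 := add_pos_of_pos_of_nonneg hcμ (hd0 μ hμΔ)
  linarith

lemma offdiag (h : IsRootSystem R Rpos Δ) {β γ : V} (hβ : β ∈ Δ) (hγ : γ ∈ Δ)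
    (hne : γ ≠ β) : ⟪γ, β⟫ ≤ 0 := by
  by_contra hpos
  push_neg at hpos
  have hβR : β ∈ R := h.pos_subset (h.simple_subset hβ)
  have hγR : γ ∈ R := h.pos_subset (h.simple_subset hγ)
  set t : ℝ := 2 * ⟪γ, β⟫ / ⟪β, β⟫ with ht
  have htpos : 0 < t := div_pos (by linarith) (iself_pos (h.nonzero β hβR))
  have hδR : γ - t • β ∈ R := h.reflect_mem β hβR γ hγR
  rcases h.pos_or_neg _ hδR with hpos' | hneg'
  · obtain ⟨c, hc0, hcsum⟩ := h.simple_nonneg_comb _ hpos'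
    have hzero : ∑ μ ∈ Δ, ((if μ = γ then 1 else 0) - (if μ = β then t else 0) - c μ) • μ = 0 := by
      have e1 : ∑ μ ∈ Δ, (if μ = γ then (1:ℝ) else 0) • μ = γ := by
        have estep : ∀ μ ∈ Δ, (if μ = γ then (1:ℝ) else 0) • μ = if μ = γ then γ else 0 := by
          intro μ _; split_ifs with hh
          · rw [hh, one_smul]
          · rw [zero_smul]
        rw [Finset.sum_congr rfl estep, Finset.sum_ite_eq' Δ γ (fun _ => γ)]
        simp [hγ]
      have e2 : ∑ μ ∈ Δ, (if μ = β then t else 0) • μ = t • β := by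
        have estep : ∀ μ ∈ Δ, (if μ = β then t else 0) • μ = if μ = β then t • β else 0 := by
          intro μ _; split_ifs with hh
          · rw [hh]
          · rw [zero_smul]
        rw [Finset.sum_congr rfl estep, Finset.sum_ite_eq' Δ β (fun _ => t • β)]
        simp [hβ]
      calc ∑ μ ∈ Δ, ((if μ = γ then (1:ℝ) else 0) - (if μ = β then t else 0) - c μ) • μ
          = ∑ μ ∈ Δ, ((if μ = γ then (1:ℝ) else 0) • μ - (if μ = β then t else 0) • μ - c μ • μ) :=
            Finset.sum_congr rfl fun μ _ => by module
        _ = (∑ μ ∈ Δ, (if μ = γ then (1:ℝ) else 0) • μ) - (∑ μ ∈ Δ, (if μ = β then t else 0) • μ)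
            - ∑ μ ∈ Δ, c μ • μ := by
            rw [Finset.sum_sub_distrib, Finset.sum_sub_distrib]
        _ = 0 := by rw [e1, e2, ← hcsum]; abel
    have := indep' h _ hzero β hβ
    rw [if_neg (Ne.symm hne), if_pos rfl] at this
    have := hc0 β hβ
    linarith
  · obtain ⟨c, hc0, hcsum⟩ := h.simple_nonneg_comb _ hneg'
    have hzero : ∑ μ ∈ Δ, ((if μ = γ then 1 else 0) - (if μ = β then t else 0) + c μ) • μ = 0 := by
      have e1 : ∑ μ ∈ Δ, (if μ = γ then (1:ℝ) else 0) • μ = γ := by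
        have estep : ∀ μ ∈ Δ, (if μ = γ then (1:ℝ) else 0) • μ = if μ = γ then γ else 0 := by
          intro μ _; split_ifs with hh
          · rw [hh, one_smul]
          · rw [zero_smul]
        rw [Finset.sum_congr rfl estep, Finset.sum_ite_eq' Δ γ (fun _ => γ)]
        simp [hγ]
      have e2 : ∑ μ ∈ Δ, (if μ = β then t else 0) • μ = t • β := by
        have estep : ∀ μ ∈ Δ, (if μ = β then t else 0) • μ = if μ = β then t • β else 0 := by
          intro μ _; split_ifs with hh
          · rw [hh]
          · rw [zero_smul]
        rw [Finset.sum_congr rfl estep, Finset.sum_ite_eq' Δ β (fun _ => t • β)]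
        simp [hβ]
      calc ∑ μ ∈ Δ, ((if μ = γ then (1:ℝ) else 0) - (if μ = β then t else 0) + c μ) • μ
          = ∑ μ ∈ Δ, ((if μ = γ then (1:ℝ) else 0) • μ - (if μ = β then t else 0) • μ + c μ • μ) :=
            Finset.sum_congr rfl fun μ _ => by module
        _ = (∑ μ ∈ Δ, (if μ = γ then (1:ℝ) else 0) • μ) - (∑ μ ∈ Δ, (if μ = β then t else 0) • μ)
            + ∑ μ ∈ Δ, c μ • μ := by
            rw [Finset.sum_add_distrib, Finset.sum_sub_distrib]
        _ = 0 := by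
            rw [e1, e2, ← hcsum]
            abel
    have := indep' h _ hzero γ hγ
    rw [if_pos rfl, if_neg hne] at this
    have := hc0 γ hγ
    linarith

lemma pos_mem_span (h : IsRootSystem R Rpos Δ) {α : V} (hα : α ∈ Rpos) :
    α ∈ Submodule.span ℝ (Δ : Set V) := by
  obtain ⟨c, _, hcsum⟩ := h.simple_nonneg_comb α hα
  rw [hcsum]
  exact Submodule.sum_mem _ fun β hβ =>
    Submodule.smul_mem _ _ (Submodule.subset_span (Finset.mem_coe.2 hβ))

lemma root_mem_span (h : IsRootSystem R Rpos Δ) {α : V} (hα : α ∈ R) :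
    α ∈ Submodule.span ℝ (Δ : Set V) := by
  rcases h.pos_or_neg α hα with hp | hn
  · exact pos_mem_span h hp
  · have := pos_mem_span h hn
    simpa using Submodule.neg_mem _ this

lemma indep2 (h : IsRootSystem R Rpos Δ) (c : ↥Δ → ℝ)
    (hc : ∑ i : ↥Δ, c i • (i : V) = 0) : ∀ i, c i = 0 := by
  classical
  set cf : V → ℝ := fun v => if hv : v ∈ Δ then c ⟨v, hv⟩ else 0 with hcf
  have hsum : ∑ β ∈ Δ, cf β • β = 0 := by
    rw [← Finset.sum_attach Δ (fun β => cf β • β), ← hc, Finset.univ_eq_attach]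
    refine Finset.sum_congr rfl fun i _ => ?_
    simp [hcf, i.2]
  intro i
  have := indep' h cf hsum i.1 i.2
  simpa [hcf, i.2] using this

variable (Δ) in
def Amat : Matrix ↥Δ ↥Δ ℝ := fun i j => ⟪coroot (i : V), (j : V)⟫

lemma coroot_inner (α v : V) : ⟪coroot α, v⟫ = (2 / ⟪α, α⟫) * ⟪α, v⟫ :=
  real_inner_smul_left _ _ _

lemma inner_coroot_self {α : V} (hα : α ≠ 0) : ⟪coroot α, α⟫ = 2 := by
  rw [coroot_inner, div_mul_eq_mul_div, mul_div_assoc, div_self (ne_of_gt (iself_pos hα)), mul_one]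

lemma Amat_det_ne (h : IsRootSystem R Rpos Δ) : (Amat Δ).det ≠ 0 := by
  intro hdet
  obtain ⟨v, hv0, hvz⟩ := (Matrix.exists_mulVec_eq_zero_iff).2 hdet
  set y : V := ∑ j : ↥Δ, v j • (j : V) with hy
  have hyperp : ∀ i : ↥Δ, ⟪coroot (i : V), y⟫ = 0 := by
    intro i
    have hrow := congrFun hvz i
    rw [Matrix.mulVec, dotProduct] at hrow
    rw [hy, inner_sum]
    calc ∑ j : ↥Δ, ⟪coroot (i : V), v j • (j : V)⟫
        = ∑ j : ↥Δ, Amat Δ i j * v j := by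
          refine Finset.sum_congr rfl fun j _ => ?_
          rw [real_inner_smul_right, mul_comm]
          rfl
      _ = 0 := hrow
  have hsimple : ∀ i : ↥Δ, ⟪(i : V), y⟫ = 0 := by
    intro i
    have hiR : (i : V) ∈ R := h.pos_subset (h.simple_subset i.2)
    have hne := h.nonzero _ hiR
    have h2 : (2 : ℝ) / ⟪(i : V), (i : V)⟫ ≠ 0 :=
      div_ne_zero two_ne_zero (ne_of_gt (iself_pos hne))
    have := hyperp i
    rw [coroot_inner] at this
    exact (mul_eq_zero.1 this).resolve_left h2
  have hyy : ⟪y, y⟫ = 0 := by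
    nth_rewrite 2 [hy]
    rw [inner_sum]
    refine Finset.sum_eq_zero fun i _ => ?_
    rw [real_inner_smul_right, real_inner_comm, hsimple i, mul_zero]
  have hy0 : y = 0 := inner_self_eq_zero.1 hyy
  exact hv0 (funext fun i => indep2 h v (hy ▸ hy0) i)

variable (Δ) in
def varpi : ↥Δ → V := fun i => ∑ j : ↥Δ, ((Amat Δ)⁻¹ j i) • (j : V)

lemma coroot_varpi (h : IsRootSystem R Rpos Δ) (k i : ↥Δ) :
    ⟪coroot (k : V), varpi Δ i⟫ = if k = i then 1 else 0 := by
  rw [varpi, inner_sum]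
  calc ∑ j : ↥Δ, ⟪coroot (k : V), ((Amat Δ)⁻¹ j i) • (j : V)⟫
      = ∑ j : ↥Δ, Amat Δ k j * (Amat Δ)⁻¹ j i := by
        refine Finset.sum_congr rfl fun j _ => ?_
        rw [real_inner_smul_right, mul_comm]
        rfl
    _ = (Amat Δ * (Amat Δ)⁻¹) k i := (Matrix.mul_apply).symm
    _ = (1 : Matrix ↥Δ ↥Δ ℝ) k i := by
        rw [Matrix.mul_nonsing_inv _ (isUnit_iff_ne_zero.2 (Amat_det_ne h))]
    _ = if k = i then 1 else 0 := Matrix.one_apply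

lemma simple_varpi (h : IsRootSystem R Rpos Δ) (k i : ↥Δ) :
    ⟪(k : V), varpi Δ i⟫ = if k = i then ⟪(k : V), (k : V)⟫ / 2 else 0 := by
  have hkR : (k : V) ∈ R := h.pos_subset (h.simple_subset k.2)
  have hkk : ⟪(k : V), (k : V)⟫ ≠ 0 := ne_of_gt (iself_pos (h.nonzero _ hkR))
  have := coroot_varpi h k i
  rw [coroot_inner] at this
  have h2 : ⟪(k:V), varpi Δ i⟫ = (⟪(k:V),(k:V)⟫/2) * ((2 / ⟪(k:V), (k:V)⟫) * ⟪(k:V), varpi Δ i⟫) := by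
    field_simp
  rw [h2, this]
  split_ifs <;> ring

lemma varpi_nonneg (h : IsRootSystem R Rpos Δ) {α : V} (hα : α ∈ Rpos) (i : ↥Δ) :
    0 ≤ ⟪α, varpi Δ i⟫ := by
  obtain ⟨c, hc0, hcsum⟩ := h.simple_nonneg_comb α hα
  rw [hcsum, sum_inner]
  refine Finset.sum_nonneg fun β hβ => ?_
  rw [real_inner_smul_left]
  have := simple_varpi h ⟨β, hβ⟩ i
  refine mul_nonneg (hc0 β hβ) ?_
  rw [this]
  split_ifs
  · have hβR : β ∈ R := h.pos_subset (h.simple_subset hβ)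
    exact le_of_lt (half_pos (iself_pos (h.nonzero β hβR)))
  · exact le_refl 0

variable (Δ) in
def rho' : V := ∑ i : ↥Δ, varpi Δ i

lemma rho'_nonneg (h : IsRootSystem R Rpos Δ) {α : V} (hα : α ∈ Rpos) : 0 ≤ ⟪α, rho' Δ⟫ := by
  rw [rho', inner_sum]
  exact Finset.sum_nonneg fun i _ => varpi_nonneg h hα i

lemma simple_rho'_pos (h : IsRootSystem R Rpos Δ) (k : ↥Δ) : 0 < ⟪(k : V), rho' Δ⟫ := by
  rw [rho', inner_sum]
  have : ∀ i : ↥Δ, ⟪(k : V), varpi Δ i⟫ = if k = i then ⟪(k : V), (k : V)⟫ / 2 else 0 :=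
    simple_varpi h k
  rw [Finset.sum_congr rfl fun i _ => this i, Finset.sum_ite_eq (Finset.univ) k
    (fun _ => ⟪(k : V), (k : V)⟫ / 2)]
  have hkR : (k : V) ∈ R := h.pos_subset (h.simple_subset k.2)
  simp [half_pos (iself_pos (h.nonzero _ hkR))]
  exact pow_pos (norm_pos_iff.2 (h.nonzero _ hkR)) 2

lemma rho'_pos (h : IsRootSystem R Rpos Δ) {α : V} (hα : α ∈ Rpos) : 0 < ⟪α, rho' Δ⟫ := by
  obtain ⟨c, hc0, hcsum⟩ := h.simple_nonneg_comb α hα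
  have hαR : α ∈ R := h.pos_subset hα
  obtain ⟨β, hβ, hcβ⟩ := exists_pos_coeff h (h.nonzero α hαR) c hc0 hcsum
  rw [hcsum, sum_inner]
  have hterm : ∀ μ ∈ Δ, 0 ≤ ⟪c μ • μ, rho' Δ⟫ := by
    intro μ hμ
    rw [real_inner_smul_left]
    exact mul_nonneg (hc0 μ hμ) (le_of_lt (simple_rho'_pos h ⟨μ, hμ⟩))
  refine Finset.sum_pos' hterm ⟨β, hβ, ?_⟩
  rw [real_inner_smul_left]
  exact mul_pos hcβ (simple_rho'_pos h ⟨β, hβ⟩)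

def prodsref (L : List V) : V ≃ₗᵢ[ℝ] V := (L.map sref).prod

lemma prodsref_nil : prodsref ([] : List V) = 1 := by simp [prodsref]

lemma prodsref_cons (β : V) (T : List V) : prodsref (β :: T) = sref β * prodsref T := by
  simp [prodsref]

lemma prodsref_append (I J : List V) : prodsref (I ++ J) = prodsref I * prodsref J := by
  simp [prodsref]

lemma prodsref_single (β : V) : prodsref [β] = sref β := by
  rw [prodsref_cons, prodsref_nil, mul_one]

lemma sref_mul_self (β : V) : sref β * sref β = 1 := by
  nth_rewrite 2 [← sref_inv β]
  group

lemma prodsref_inv (L : List V) : (prodsref L)⁻¹ = prodsref L.reverse := by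
  induction L with
  | nil => simp [prodsref_nil]
  | cons β T ih =>
      rw [prodsref_cons, mul_inv_rev, ih, sref_inv, List.reverse_cons, prodsref_append,
        prodsref_single]

lemma sref_pos_mem_simple (h : IsRootSystem R Rpos Δ) :
    ∀ n : ℕ, ∀ α, α ∈ Rpos →
      ((Rpos.filter (fun γ => ⟪γ, rho' Δ⟫ < ⟪α, rho' Δ⟫)).card ≤ n) →
      sref α ∈ Subgroup.closure {g : V ≃ₗᵢ[ℝ] V | ∃ β ∈ Δ, g = sref β} := by
  intro n
  induction n with
  | zero =>
      intro α hα hcard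
      by_cases hαΔ : α ∈ Δ
      · exact Subgroup.subset_closure ⟨α, hαΔ, rfl⟩
      · exfalso
        obtain ⟨c, hc0, hcsum⟩ := h.simple_nonneg_comb α hα
        have hαR : α ∈ R := h.pos_subset hα
        have hsum : 0 < ∑ μ ∈ Δ, c μ * ⟪μ, α⟫ := by
          have : ⟪α, α⟫ = ∑ μ ∈ Δ, c μ * ⟪μ, α⟫ := by
            nth_rewrite 1 [hcsum]
            rw [sum_inner]
            exact Finset.sum_congr rfl fun μ _ => real_inner_smul_left _ _ _
          rw [← this]
          exact iself_pos (h.nonzero α hαR)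
        obtain ⟨β, hβΔ, hβpos⟩ : ∃ β ∈ Δ, 0 < c β * ⟪β, α⟫ := by
          by_contra hcon
          push_neg at hcon
          exact absurd (Finset.sum_nonpos hcon) (not_le.2 hsum)
        have hβα : 0 < ⟪α, β⟫ := by
          rcases lt_or_ge 0 ⟪β, α⟫ with hh | hh
          · rwa [real_inner_comm]
          · nlinarith [hc0 β hβΔ]
        have hne : α ≠ β := fun e => hαΔ (e ▸ hβΔ)
        have hγ : sref β α ∈ Rpos := sref_simple_perm h hβΔ hα hne
        have hlt : ⟪sref β α, rho' Δ⟫ < ⟪α, rho' Δ⟫ := by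
          rw [sref_apply2, inner_sub_left, real_inner_smul_left]
          have hβR : β ∈ R := h.pos_subset (h.simple_subset hβΔ)
          have ht : 0 < 2 * ⟪α, β⟫ / ⟪β, β⟫ :=
            div_pos (by linarith) (iself_pos (h.nonzero β hβR))
          have := simple_rho'_pos h ⟨β, hβΔ⟩
          nlinarith
        have : sref β α ∈ Rpos.filter (fun γ => ⟪γ, rho' Δ⟫ < ⟪α, rho' Δ⟫) :=
          Finset.mem_filter.2 ⟨hγ, hlt⟩
        have := Finset.card_pos.2 ⟨_, this⟩
        omega
  | succ n ih =>
      intro α hα hcard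
      by_cases hαΔ : α ∈ Δ
      · exact Subgroup.subset_closure ⟨α, hαΔ, rfl⟩
      · obtain ⟨c, hc0, hcsum⟩ := h.simple_nonneg_comb α hα
        have hαR : α ∈ R := h.pos_subset hα
        have hsum : 0 < ∑ μ ∈ Δ, c μ * ⟪μ, α⟫ := by
          have : ⟪α, α⟫ = ∑ μ ∈ Δ, c μ * ⟪μ, α⟫ := by
            nth_rewrite 1 [hcsum]
            rw [sum_inner]
            exact Finset.sum_congr rfl fun μ _ => real_inner_smul_left _ _ _
          rw [← this]
          exact iself_pos (h.nonzero α hαR)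
        obtain ⟨β, hβΔ, hβpos⟩ : ∃ β ∈ Δ, 0 < c β * ⟪β, α⟫ := by
          by_contra hcon
          push_neg at hcon
          exact absurd (Finset.sum_nonpos hcon) (not_le.2 hsum)
        have hβα : 0 < ⟪α, β⟫ := by
          rcases lt_or_ge 0 ⟪β, α⟫ with hh | hh
          · rwa [real_inner_comm]
          · nlinarith [hc0 β hβΔ]
        have hne : α ≠ β := fun e => hαΔ (e ▸ hβΔ)
        set γ := sref β α with hγdef
        have hγ : γ ∈ Rpos := sref_simple_perm h hβΔ hα hne
        have hlt : ⟪γ, rho' Δ⟫ < ⟪α, rho' Δ⟫ := by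
          rw [hγdef, sref_apply2, inner_sub_left, real_inner_smul_left]
          have hβR : β ∈ R := h.pos_subset (h.simple_subset hβΔ)
          have ht : 0 < 2 * ⟪α, β⟫ / ⟪β, β⟫ :=
            div_pos (by linarith) (iself_pos (h.nonzero β hβR))
          have := simple_rho'_pos h ⟨β, hβΔ⟩
          nlinarith
        have hss : Rpos.filter (fun γ' => ⟪γ', rho' Δ⟫ < ⟪γ, rho' Δ⟫) ⊂
            Rpos.filter (fun γ' => ⟪γ', rho' Δ⟫ < ⟪α, rho' Δ⟫) := by
          constructor
          · intro x hx
            rcases Finset.mem_filter.1 hx with ⟨hx1, hx2⟩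
            exact Finset.mem_filter.2 ⟨hx1, lt_trans hx2 hlt⟩
          · intro hsub
            have : γ ∈ Rpos.filter (fun γ' => ⟪γ', rho' Δ⟫ < ⟪γ, rho' Δ⟫) :=
              hsub (Finset.mem_filter.2 ⟨hγ, hlt⟩)
            exact absurd (Finset.mem_filter.1 this).2 (lt_irrefl _)
        have hcard' : (Rpos.filter (fun γ' => ⟪γ', rho' Δ⟫ < ⟪γ, rho' Δ⟫)).card ≤ n := by
          have := Finset.card_lt_card hss
          omega
        have hγW := ih γ hγ hcard'
        have hαγ : α = sref β γ := (sref_sref β α).symm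
        have : sref α = sref β * sref γ * (sref β)⁻¹ := by
          nth_rewrite 1 [hαγ]
          exact sref_conj (sref β) γ
        rw [this]
        have hβW : sref β ∈ Subgroup.closure {g : V ≃ₗᵢ[ℝ] V | ∃ β' ∈ Δ, g = sref β'} :=
          Subgroup.subset_closure ⟨β, hβΔ, rfl⟩
        exact Subgroup.mul_mem _ (Subgroup.mul_mem _ hβW hγW) (Subgroup.inv_mem _ hβW)

lemma weyl_le_simple (h : IsRootSystem R Rpos Δ) :
    weylGroup R ≤ Subgroup.closure {g : V ≃ₗᵢ[ℝ] V | ∃ β ∈ Δ, g = sref β} := by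
  rw [weylGroup, Subgroup.closure_le]
  rintro g ⟨α, hαR, rfl⟩
  rcases h.pos_or_neg α hαR with hp | hn
  · exact sref_pos_mem_simple h _ α hp (le_refl _)
  · have : sref (-α) ∈ Subgroup.closure {g : V ≃ₗᵢ[ℝ] V | ∃ β ∈ Δ, g = sref β} :=
      sref_pos_mem_simple h _ (-α) hn (le_refl _)
    rwa [sref_neg] at this

lemma exists_word (h : IsRootSystem R Rpos Δ) {g : V ≃ₗᵢ[ℝ] V} (hg : g ∈ weylGroup R) :
    ∃ L : List V, (∀ β ∈ L, β ∈ Δ) ∧ g = prodsref L := by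
  have hg' := weyl_le_simple h hg
  clear hg
  induction hg' using Subgroup.closure_induction with
  | mem x hx =>
      obtain ⟨β, hβ, rfl⟩ := hx
      exact ⟨[β], by simpa using hβ, (prodsref_single β).symm⟩
  | one => exact ⟨[], by simp, prodsref_nil.symm⟩
  | mul x y hx hy ihx ihy =>
      obtain ⟨L1, hL1, rfl⟩ := ihx
      obtain ⟨L2, hL2, rfl⟩ := ihy
      refine ⟨L1 ++ L2, ?_, (prodsref_append L1 L2).symm⟩
      intro β hβ
      rcases List.mem_append.1 hβ with hh | hh
      · exact hL1 β hh
      · exact hL2 β hh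
  | inv x hx ihx =>
      obtain ⟨L, hL, rfl⟩ := ihx
      refine ⟨L.reverse, fun β hβ => hL β (List.mem_reverse.1 hβ), prodsref_inv L⟩

lemma exchange (h : IsRootSystem R Rpos Δ) :
    ∀ L : List V, (∀ β ∈ L, β ∈ Δ) → ∀ δ, δ ∈ Δ → prodsref L δ ∉ Rpos →
    ∃ L' : List V, (∀ β ∈ L', β ∈ Δ) ∧ L.length = L'.length + 1 ∧
      prodsref L * sref δ = prodsref L' := by
  intro L
  induction L with
  | nil =>
      intro _ δ hδ hbad
      exact absurd (h.simple_subset hδ) (by simpa [prodsref_nil] using hbad)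
  | cons β T ih =>
      intro hL δ hδ hbad
      have hβ : β ∈ Δ := hL β List.mem_cons_self
      have hT : ∀ b ∈ T, b ∈ Δ := fun b hb => hL b (List.mem_cons_of_mem _ hb)
      by_cases hc : prodsref T δ ∈ Rpos
      · have hflip : sref β (prodsref T δ) ∉ Rpos := by
          rw [prodsref_cons, mul_apply] at hbad
          exact hbad
        have heq : prodsref T δ = β := by
          by_contra hne
          exact hflip (sref_simple_perm h hβ hc hne)
        refine ⟨T, hT, by simp, ?_⟩
        have hconj : sref (prodsref T δ) = prodsref T * sref δ * (prodsref T)⁻¹ :=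
          sref_conj (prodsref T) δ
        rw [heq] at hconj
        have hmove : prodsref T * sref δ = sref β * prodsref T := by
          rw [hconj]
          group
        rw [prodsref_cons, mul_assoc, hmove, ← mul_assoc, sref_mul_self, one_mul]
      · obtain ⟨T', hT', hlen, heq⟩ := ih hT δ hδ hc
        refine ⟨β :: T', ?_, by simp [hlen], ?_⟩
        · intro b hb
          rcases List.mem_cons.1 hb with rfl | hh
          · exact hβ
          · exact hT' b hh
        · rw [prodsref_cons, mul_assoc, heq, prodsref_cons]

lemma perm_id_aux (h : IsRootSystem R Rpos Δ) :
    ∀ n : ℕ, ∀ L : List V, L.length ≤ n → (∀ β ∈ L, β ∈ Δ) →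
      (∀ γ ∈ Rpos, prodsref L γ ∈ Rpos) → prodsref L = 1 := by
  intro n
  induction n with
  | zero =>
      intro L hlen _ _
      rw [List.length_eq_zero_iff.1 (Nat.le_zero.1 hlen)]
      exact prodsref_nil
  | succ n ih =>
      intro L hlen hL hperm
      rcases List.eq_nil_or_concat L with rfl | ⟨I, δ, rfl⟩
      · exact prodsref_nil
      · have hδ : δ ∈ Δ := hL δ (by simp)
        have hI : ∀ b ∈ I, b ∈ Δ := fun b hb => hL b (by simp [hb])
        have hval : prodsref (I.concat δ) δ = -(prodsref I δ) := by
          rw [List.concat_eq_append, prodsref_append, prodsref_single, mul_apply, sref_self,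
            map_neg]
        have h2 : prodsref I δ ∉ Rpos := by
          intro hc
          have h1 : prodsref (I.concat δ) δ ∈ Rpos := hperm δ (h.simple_subset hδ)
          rw [hval] at h1
          exact h.not_both _ hc h1
        obtain ⟨L', hL', hlen', heq⟩ := exchange h I hI δ hδ h2
        have hg : prodsref (I.concat δ) = prodsref L' := by
          rw [List.concat_eq_append, prodsref_append, prodsref_single]
          exact heq
        rw [hg]
        refine ih L' ?_ hL' ?_
        · have : (I.concat δ).length = I.length + 1 := by simp
          omega
        · intro γ hγ
          rw [← hg]
          exact hperm γ hγ

lemma weyl_perm_id (h : IsRootSystem R Rpos Δ) {g : V ≃ₗᵢ[ℝ] V} (hg : g ∈ weylGroup R)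
    (hperm : ∀ γ ∈ Rpos, g γ ∈ Rpos) : g = 1 := by
  obtain ⟨L, hL, rfl⟩ := exists_word h hg
  exact perm_id_aux h L.length L (le_refl _) hL hperm

lemma cone_lemma_aux (h : IsRootSystem R Rpos Δ) {lam : V} (hdom : isDominant Rpos lam) :
    ∀ n : ℕ, ∀ L : List V, L.length ≤ n → (∀ β ∈ L, β ∈ Δ) →
      ∃ t : V → ℝ, (∀ α ∈ Rpos, 0 ≤ t α) ∧ lam - prodsref L lam = ∑ α ∈ Rpos, t α • α := by
  intro n
  induction n with
  | zero =>
      intro L hlen _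
      rw [List.length_eq_zero_iff.1 (Nat.le_zero.1 hlen)]
      exact ⟨fun _ => 0, fun _ _ => le_refl 0, by simp [prodsref_nil]⟩
  | succ n ih =>
      intro L hlen hL
      rcases List.eq_nil_or_concat L with rfl | ⟨I, δ, rfl⟩
      · exact ⟨fun _ => 0, fun _ _ => le_refl 0, by simp [prodsref_nil]⟩
      · have hδ : δ ∈ Δ := hL δ (by simp)
        have hI : ∀ b ∈ I, b ∈ Δ := fun b hb => hL b (by simp [hb])
        have hIlen : I.length ≤ n := by
          have : (I.concat δ).length = I.length + 1 := by simp
          omega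
        by_cases hc : prodsref I δ ∈ Rpos
        · obtain ⟨t, ht0, htsum⟩ := ih I hIlen hI
          set s : ℝ := 2 * ⟪lam, δ⟫ / ⟪δ, δ⟫ with hs
          have hδR : δ ∈ R := h.pos_subset (h.simple_subset hδ)
          have hs0 : 0 ≤ s := div_nonneg (by linarith [hdom δ (h.simple_subset hδ)])
            (le_of_lt (iself_pos (h.nonzero δ hδR)))
          set β' := prodsref I δ with hβ'
          refine ⟨fun α => t α + (if α = β' then s else 0), fun α hα =>
            add_nonneg (ht0 α hα) (by split_ifs <;> simp [hs0]), ?_⟩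
          have hval : prodsref (I.concat δ) lam
              = prodsref I lam - s • β' := by
            rw [List.concat_eq_append, prodsref_append, prodsref_single, mul_apply, sref_apply2,
              map_sub, map_smul]
          have esplit : ∑ α ∈ Rpos, (t α + (if α = β' then s else 0)) • α
              = (∑ α ∈ Rpos, t α • α) + s • β' := by
            have e2 : ∑ α ∈ Rpos, (if α = β' then s else 0) • α = s • β' := by
              have estep : ∀ α ∈ Rpos, (if α = β' then s else 0) • α
                  = if α = β' then s • β' else 0 := by
                intro α _
                split_ifs with hh
                · rw [hh]
                · rw [zero_smul]
              rw [Finset.sum_congr rfl estep, Finset.sum_ite_eq' Rpos β' (fun _ => s • β')]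
              simp [hc]
            calc ∑ α ∈ Rpos, (t α + (if α = β' then s else 0)) • α
                = ∑ α ∈ Rpos, (t α • α + (if α = β' then s else 0) • α) :=
                  Finset.sum_congr rfl fun α _ => by module
              _ = _ := by rw [Finset.sum_add_distrib, e2]
          rw [hval, esplit, ← htsum]
          abel
        · obtain ⟨L', hL', hlen', heq⟩ := exchange h I hI δ hδ hc
          have hg : prodsref (I.concat δ) = prodsref L' := by
            rw [List.concat_eq_append, prodsref_append, prodsref_single]
            exact heq
          rw [hg]
          refine ih L' ?_ hL'
          omega

lemma weyl_sub_cone (h : IsRootSystem R Rpos Δ) {lam : V} (hdom : isDominant Rpos lam)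
    {g : V ≃ₗᵢ[ℝ] V} (hg : g ∈ weylGroup R) :
    ∃ t : V → ℝ, (∀ α ∈ Rpos, 0 ≤ t α) ∧ lam - g lam = ∑ α ∈ Rpos, t α • α := by
  obtain ⟨L, hL, rfl⟩ := exists_word h hg
  exact cone_lemma_aux h hdom L.length L (le_refl _) hL

lemma F2 (h : IsRootSystem R Rpos Δ) {lam : V} (hdom : isDominant Rpos lam)
    {g : V ≃ₗᵢ[ℝ] V} (hg : g ∈ weylGroup R) (i : ↥Δ) :
    0 ≤ ⟪lam - g lam, varpi Δ i⟫ := by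
  obtain ⟨t, ht0, htsum⟩ := weyl_sub_cone h hdom hg
  rw [htsum, sum_inner]
  refine Finset.sum_nonneg fun α hα => ?_
  rw [real_inner_smul_left]
  exact mul_nonneg (ht0 α hα) (varpi_nonneg h hα i)

lemma rat_sum {ι : Type*} (s : Finset ι) (f : ι → ℝ) (hf : ∀ i ∈ s, ∃ q : ℚ, f i = q) :
    ∃ q : ℚ, ∑ i ∈ s, f i = q := by
  classical
  induction s using Finset.induction with
  | empty => exact ⟨0, by simp⟩
  | @insert a s' hni ih =>
      obtain ⟨q1, hq1⟩ := hf a (Finset.mem_insert_self a s')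
      obtain ⟨q2, hq2⟩ := ih fun i hi => hf i (Finset.mem_insert_of_mem hi)
      exact ⟨q1 + q2, by rw [Finset.sum_insert hni, hq1, hq2]; push_cast; ring⟩

lemma lam_pair_rat (h : IsRootSystem R Rpos Δ) {lam : V} (hlat : lam ∈ corootLattice R)
    {δ : V} (hδ : δ ∈ R) : ∃ q : ℚ, ⟪lam, δ⟫ = q := by
  refine Submodule.span_induction ?_ ?_ ?_ ?_ hlat
  · rintro x ⟨γ, hγ, rfl⟩
    have hγR : γ ∈ (R : Finset V) := hγ
    obtain ⟨n, hn⟩ := h.crystallographic γ hγR δ hδ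
    refine ⟨(n : ℚ), ?_⟩
    rw [coroot_inner]
    push_cast
    rw [← hn, real_inner_comm γ δ]
    ring
  · exact ⟨0, by simp⟩
  · rintro x y _ _ ⟨q1, hq1⟩ ⟨q2, hq2⟩
    exact ⟨q1 + q2, by rw [inner_add_left, hq1, hq2]; push_cast; ring⟩
  · rintro z x _ ⟨q, hq⟩
    refine ⟨z * q, ?_⟩
    have : (z : ℤ) • x = (z : ℝ) • x := by
      rw [← Int.cast_smul_eq_zsmul ℝ]
    rw [this, real_inner_smul_left, hq]
    push_cast
    ring

lemma weyl_fix_perp (h : IsRootSystem R Rpos Δ) {g : V ≃ₗᵢ[ℝ] V} (hg : g ∈ weylGroup R)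
    {v : V} (hv : ∀ α ∈ R, ⟪v, α⟫ = 0) : g v = v := by
  have : g v = v ∧ g⁻¹ v = v := by
    induction hg using Subgroup.closure_induction with
    | mem x hx =>
        obtain ⟨α, hαR, rfl⟩ := hx
        have : sref α v = v := by
          rw [sref_apply2, hv α hαR]
          simp
        exact ⟨this, by rw [sref_inv]; exact this⟩
    | one => constructor <;> simp
    | mul x y hx hy ihx ihy =>
        refine ⟨?_, ?_⟩
        · show x (y v) = v
          rw [ihy.1, ihx.1]
        · rw [mul_inv_rev]
          show y⁻¹ (x⁻¹ v) = v
          rw [ihx.2, ihy.2]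
    | inv x hx ihx => exact ⟨ihx.2, by rw [inv_inv]; exact ihx.1⟩
  exact this.1

lemma weyl_fixes_all (h : IsRootSystem R Rpos Δ) {g : V ≃ₗᵢ[ℝ] V} (hg : g ∈ weylGroup R)
    (hfix : ∀ α ∈ R, g α = α) : g = 1 := by
  ext v
  obtain ⟨y, hy, z, hz, rfl⟩ :=
    Submodule.exists_add_mem_mem_orthogonal (K := Submodule.span ℝ (R : Set V)) v
  have hgy : g y = y := by
    have : y ∈ {x : V | g x = x} := by
      refine Submodule.span_induction ?_ ?_ ?_ ?_ hy
      · intro x hx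
        exact hfix x hx
      · simp
      · intro a b _ _ ha hb
        show g (a + b) = a + b
        rw [map_add, ha, hb]
      · intro c a _ ha
        show g (c • a) = c • a
        rw [map_smul, ha]
    exact this
  have hgz : g z = z := by
    refine weyl_fix_perp h hg fun α hα => ?_
    have := (Submodule.mem_orthogonal _ z).1 hz α (Submodule.subset_span hα)
    rw [real_inner_comm]
    exact this
  show g (y + z) = y + z
  rw [map_add, hgy, hgz]

lemma weyl_order_pos (h : IsRootSystem R Rpos Δ) {g : V ≃ₗᵢ[ℝ] V} (hg : g ∈ weylGroup R) :
    0 < orderOf g := by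
  classical
  have hinj : Function.Injective
      (fun x : {x : V ≃ₗᵢ[ℝ] V // x ∈ weylGroup R} =>
        fun α : ↥R => (⟨x.1 (α : V), weyl_root h x.2 α.2⟩ : ↥R)) := by
    intro x1 x2 hx
    have heq : ∀ α ∈ R, x1.1 α = x2.1 α := by
      intro α hα
      have := congrFun hx ⟨α, hα⟩
      exact Subtype.ext_iff.1 this
    have : x2.1⁻¹ * x1.1 = 1 := by
      refine weyl_fixes_all h (mul_mem (inv_mem x2.2) x1.2) fun α hα => ?_
      show x2.1⁻¹ (x1.1 α) = α
      rw [heq α hα, inv_apply_eq']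
    ext1
    have := mul_eq_one_iff_inv_eq.1 this
    rw [inv_inv] at this
    exact this.symm
  have hfin : Finite {x : V ≃ₗᵢ[ℝ] V // x ∈ weylGroup R} :=
    Finite.of_injective _ hinj
  haveI : Finite (weylGroup R) := hfin
  have hord : IsOfFinOrder (⟨g, hg⟩ : weylGroup R) := isOfFinOrder_of_finite _
  have : orderOf ((weylGroup R).subtype ⟨g, hg⟩) = orderOf (⟨g, hg⟩ : weylGroup R) :=
    orderOf_injective _ (Subgroup.subtype_injective _) _
  have hg' : orderOf g = orderOf (⟨g, hg⟩ : weylGroup R) := this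
  rw [hg']
  exact hord.orderOf_pos

lemma coeffs_rational (h : IsRootSystem R Rpos Δ) (x : V) (tR : ↥Δ → ℝ)
    (hx : x = ∑ j : ↥Δ, tR j • coroot (j : V))
    (hrat : ∀ j : ↥Δ, ∃ q : ℚ, ⟪x, (j : V)⟫ = q) :
    ∀ j : ↥Δ, ∃ q : ℚ, tR j = q := by
  classical
  -- integer entries of Amat
  have hent : ∀ i j : ↥Δ, ∃ q : ℚ, Amat Δ i j = (q : ℝ) := by
    intro i j
    have hiR : (i : V) ∈ R := h.pos_subset (h.simple_subset i.2)
    have hjR : (j : V) ∈ R := h.pos_subset (h.simple_subset j.2)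
    obtain ⟨n, hn⟩ := h.crystallographic (i : V) hiR (j : V) hjR
    refine ⟨(n : ℚ), ?_⟩
    show ⟪coroot (i : V), (j : V)⟫ = _
    rw [coroot_inner]
    push_cast
    rw [← hn, real_inner_comm (i:V) (j:V)]
    ring
  choose Aq hAq using hent
  set B : Matrix ↥Δ ↥Δ ℝ := (Amat Δ).transpose with hB
  set Bq : Matrix ↥Δ ↥Δ ℚ := (Matrix.of Aq).transpose with hBq
  have hBcast : ∀ i j, B i j = ((Bq i j : ℚ) : ℝ) := by
    intro i j
    rw [hB, hBq]
    exact hAq j i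
  have hdetB : B.det ≠ 0 := by
    rw [hB, Matrix.det_transpose]
    exact Amat_det_ne h
  have hdetBq : Bq.det ≠ 0 := by
    intro hc
    apply hdetB
    have hmap : B = (Rat.castHom ℝ).mapMatrix Bq := by
      ext i j
      rw [RingHom.mapMatrix_apply, Matrix.map_apply]
      exact hBcast i j
    have hd : B.det = ((Bq.det : ℚ) : ℝ) := by
      rw [hmap, ← RingHom.map_det]
      rfl
    rw [hd, hc]
    simp
  set v : ↥Δ → ℝ := fun j => ⟪x, (j : V)⟫ with hv
  choose vq hvq using hrat
  have hmv : B.mulVec tR = v := by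
    funext j
    rw [Matrix.mulVec, dotProduct]
    rw [hv]
    simp only []
    rw [hx, sum_inner]
    refine Finset.sum_congr rfl fun i _ => ?_
    rw [real_inner_smul_left, hB]
    show (Amat Δ) i j * tR i = _
    rw [mul_comm]
    rfl
  set tq : ↥Δ → ℚ := Bq⁻¹.mulVec vq with htq
  have hBqtq : Bq.mulVec tq = vq := by
    rw [htq, Matrix.mulVec_mulVec, Matrix.mul_nonsing_inv _ (isUnit_iff_ne_zero.2 hdetBq),
      Matrix.one_mulVec]
  have hmv2 : B.mulVec (fun i => ((tq i : ℚ) : ℝ)) = v := by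
    funext j
    have hrow := congrFun hBqtq j
    rw [Matrix.mulVec, dotProduct] at hrow ⊢
    show ∑ i : ↥Δ, B j i * ((tq i : ℚ) : ℝ) = ⟪x, (j : V)⟫
    rw [hvq j, ← hrow]
    push_cast
    exact Finset.sum_congr rfl fun i _ => by rw [hBcast j i]
  have hdiff : B.mulVec (tR - fun i => ((tq i : ℚ) : ℝ)) = 0 := by
    rw [Matrix.mulVec_sub, hmv, hmv2, sub_self]
  have : (tR - fun i => ((tq i : ℚ) : ℝ)) = 0 := by
    by_contra hc
    exact hdetB ((Matrix.exists_mulVec_eq_zero_iff).1 ⟨_, hc, hdiff⟩)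
  intro j
  refine ⟨tq j, ?_⟩
  have := congrFun this j
  simp only [Pi.sub_apply, Pi.zero_apply, sub_eq_zero] at this
  exact this

end withRS

lemma inner_g_inv' (g : V ≃ₗᵢ[ℝ] V) (x y : V) : ⟪g x, y⟫ = ⟪x, g⁻¹ y⟫ := by
  rw [← inner_g g⁻¹ (g x) y, inv_apply_eq']

end Stmt12

theorem stmt_12 (R Rpos Δ : Finset V) (h : IsRootSystem R Rpos Δ)
    (lam : V) (hlat : lam ∈ corootLattice R) (hdom : isDominant Rpos lam)
    (w : V ≃ₗᵢ[ℝ] V) (hw : w ∈ weylGroup R) (hw1 : w ≠ 1)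
    (m : ℕ) (hm : orderOf w = m)
    (ν : V) (hνdom : isDominant Rpos ν)
    (u : V ≃ₗᵢ[ℝ] V) (hu : u ∈ weylGroup R)
    (hν : ν = u ((m : ℝ)⁻¹ • ∑ i ∈ Finset.range m, (w ^ (i + 1)) lam)) :
    ∃ αi ∈ Δ,
      domLE Δ (lam - (⟪lam, αi⟫ / 2) • coroot αi) lam ∧
      domLE Δ ν (lam - (⟪lam, αi⟫ / 2) • coroot αi) := by
  classical
  have hmpos : 0 < m := hm ▸ Stmt12.weyl_order_pos h hw
  have hm0 : (m : ℝ) ≠ 0 := Nat.cast_ne_zero.2 hmpos.ne'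
  set S : V := ∑ k ∈ Finset.range m, (w ^ (k + 1)) lam with hS
  have hgkW : ∀ k : ℕ, u * w ^ (k + 1) ∈ weylGroup R := fun k => mul_mem hu (pow_mem hw _)
  have hνu : ν = u ((m : ℝ)⁻¹ • S) := hν
  have hν2 : ν = (m : ℝ)⁻¹ • ∑ k ∈ Finset.range m, (u * w ^ (k + 1)) lam := by
    rw [hνu, map_smul, hS, map_sum]
    exact congrArg _ (Finset.sum_congr rfl fun k _ => rfl)
  have hsub : lam - ν = (m : ℝ)⁻¹ • ∑ k ∈ Finset.range m, (lam - (u * w ^ (k + 1)) lam) := by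
    rw [hν2, Finset.sum_sub_distrib, smul_sub, Finset.sum_const, Finset.card_range]
    have hmm : (m : ℝ)⁻¹ • (m • lam : V) = lam := by
      rw [← Nat.cast_smul_eq_nsmul ℝ m lam, smul_smul, inv_mul_cancel₀ hm0, one_smul]
    rw [hmm]
  have hR_of_simple : ∀ β ∈ Δ, β ∈ R := fun β hβ => h.pos_subset (h.simple_subset hβ)
  -- lam - ν lies in the span of the simple roots
  have hx_span : lam - ν ∈ Submodule.span ℝ (Δ : Set V) := by
    rw [hsub]
    refine Submodule.smul_mem _ _ (Submodule.sum_mem _ fun k _ => ?_)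
    obtain ⟨t, _, htsum⟩ := Stmt12.weyl_sub_cone h hdom (hgkW k)
    rw [htsum]
    exact Submodule.sum_mem _ fun α hα => Submodule.smul_mem _ _ (Stmt12.pos_mem_span h hα)
  obtain ⟨e, _, he⟩ := Submodule.mem_span_finset.1 hx_span
  set tR : ↥Δ → ℝ := fun j => e (j : V) * ⟪(j : V), (j : V)⟫ / 2 with htRdef
  have hxsum : lam - ν = ∑ j : ↥Δ, tR j • coroot (j : V) := by
    rw [← he, ← Finset.sum_attach Δ (fun β => e β • β), Finset.univ_eq_attach]
    refine Finset.sum_congr rfl fun j _ => ?_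
    have hjR : (j : V) ∈ R := hR_of_simple _ j.2
    have hjj : ⟪(j : V), (j : V)⟫ ≠ 0 := ne_of_gt (Stmt12.iself_pos (h.nonzero _ hjR))
    rw [coroot, smul_smul, htRdef]
    congr 1
    field_simp
  have hextract : ∀ i : ↥Δ, ⟪lam - ν, Stmt12.varpi Δ i⟫ = tR i := by
    intro i
    rw [hxsum, sum_inner]
    have estep : ∀ j : ↥Δ, ⟪tR j • coroot (j : V), Stmt12.varpi Δ i⟫ = if j = i then tR j else 0 := by
      intro j
      rw [real_inner_smul_left, Stmt12.coroot_varpi h j i]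
      split_ifs <;> simp
    rw [Finset.sum_congr rfl fun j _ => estep j,
      Finset.sum_ite_eq' Finset.univ i (fun j => tR j)]
    simp
  have htR0 : ∀ i : ↥Δ, 0 ≤ tR i := by
    intro i
    rw [← hextract i, hsub, real_inner_smul_left]
    refine mul_nonneg (inv_nonneg.2 (Nat.cast_nonneg m)) ?_
    rw [sum_inner]
    exact Finset.sum_nonneg fun k _ => Stmt12.F2 h hdom (hgkW k) i
  -- rationality
  have hxrat : ∀ j : ↥Δ, ∃ q : ℚ, ⟪lam - ν, (j : V)⟫ = q := by
    intro j
    obtain ⟨q1, hq1⟩ := Stmt12.lam_pair_rat h hlat (hR_of_simple _ j.2)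
    have hνr : ∃ q : ℚ, ⟪ν, (j : V)⟫ = q := by
      have hterm : ∀ k ∈ Finset.range m, ∃ q : ℚ, ⟪(u * w ^ (k + 1)) lam, (j : V)⟫ = q := by
        intro k _
        rw [Stmt12.inner_g_inv']
        exact Stmt12.lam_pair_rat h hlat
          (Stmt12.weyl_root h (inv_mem (hgkW k)) (hR_of_simple _ j.2))
      obtain ⟨qs, hqs⟩ := Stmt12.rat_sum (Finset.range m) _ hterm
      refine ⟨(1 / (m : ℚ)) * qs, ?_⟩
      rw [hν2, real_inner_smul_left, sum_inner, hqs]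
      push_cast
      ring
    obtain ⟨q2, hq2⟩ := hνr
    exact ⟨q1 - q2, by rw [inner_sub_left, hq1, hq2]; push_cast; ring⟩
  have hqrat := Stmt12.coeffs_rational h _ tR hxsum hxrat
  choose tq htq using hqrat
  -- invariance of the average
  have hSw : w S = S := by
    rw [hS, map_sum]
    have hstep : ∀ k : ℕ, w ((w ^ (k + 1)) lam) = (w ^ (k + 1 + 1)) lam := by
      intro k
      have hp : w ^ (k + 1 + 1) = w * w ^ (k + 1) := pow_succ' w (k + 1)
      rw [hp]
      rfl
    calc ∑ k ∈ Finset.range m, w ((w ^ (k + 1)) lam)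
        = ∑ k ∈ Finset.range m, (w ^ (k + 1 + 1)) lam :=
          Finset.sum_congr rfl fun k _ => hstep k
      _ = ∑ k ∈ Finset.range m, (w ^ (k + 1)) lam := by
          have h1 := Finset.sum_range_succ (fun k => (w ^ (k + 1)) lam) m
          have h2 := Finset.sum_range_succ' (fun k => (w ^ (k + 1)) lam) m
          have h3 : (w ^ (m + 1)) lam = (w ^ (0 + 1)) lam := by
            rw [pow_succ, ← hm, pow_orderOf_eq_one w, one_mul]
            norm_num
          have hcomb := h2.symm.trans h1
          rw [h3] at hcomb
          exact add_right_cancel hcomb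
  have hinvar : w ((m : ℝ)⁻¹ • S) = (m : ℝ)⁻¹ • S := by rw [map_smul, hSw]
  -- dichotomy producing the simple root
  have hkey : ∃ αi ∈ Δ, (⟪lam, αi⟫ = 0 ∨ ⟪ν, αi⟫ = 0) := by
    by_cases hcase : ∃ β ∈ Δ, ⟪lam, β⟫ = 0
    · obtain ⟨β, h1, h2⟩ := hcase
      exact ⟨β, h1, Or.inl h2⟩
    · by_cases hcase2 : ∃ β ∈ Δ, ⟪ν, β⟫ = 0
      · obtain ⟨β, h1, h2⟩ := hcase2
        exact ⟨β, h1, Or.inr h2⟩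
      · exfalso
        push_neg at hcase2
        set w' := u * w * u⁻¹ with hw'def
        have hw'W : w' ∈ weylGroup R := mul_mem (mul_mem hu hw) (inv_mem hu)
        have hw'1 : w' ≠ 1 := by
          intro hone
          apply hw1
          have hwrepr : w = u⁻¹ * w' * u := by rw [hw'def]; group
          rw [hwrepr, hone]
          group
        have hνfix : w' ν = ν := by
          rw [hνu, hw'def]
          show ((u * w) * u⁻¹) (u ((m : ℝ)⁻¹ • S)) = _
          rw [Stmt12.mul_apply, Stmt12.inv_apply_eq', Stmt12.mul_apply, hinvar]
        have hνinvfix : w'⁻¹ ν = ν := by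
          have := congrArg (fun z => w'⁻¹ z) hνfix
          rw [Stmt12.inv_apply_eq'] at this
          exact this.symm
        have hνpos : ∀ γ ∈ Rpos, 0 < ⟪ν, γ⟫ := by
          intro γ hγ
          obtain ⟨c, hc0, hcsum⟩ := h.simple_nonneg_comb γ hγ
          obtain ⟨β, hβΔ, hcβ⟩ :=
            Stmt12.exists_pos_coeff h (h.nonzero γ (h.pos_subset hγ)) c hc0 hcsum
          have hterm : ∀ μ ∈ Δ, 0 ≤ c μ * ⟪ν, μ⟫ := fun μ hμ =>
            mul_nonneg (hc0 μ hμ) (hνdom μ (h.simple_subset hμ))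
          have hposβ : 0 < c β * ⟪ν, β⟫ := by
            have hβ0 : 0 < ⟪ν, β⟫ :=
              lt_of_le_of_ne (hνdom β (h.simple_subset hβΔ)) (Ne.symm (hcase2 β hβΔ))
            exact mul_pos hcβ hβ0
          have hlt : 0 < ∑ μ ∈ Δ, c μ * ⟪ν, μ⟫ := Finset.sum_pos' hterm ⟨β, hβΔ, hposβ⟩
          have heq : ⟪ν, γ⟫ = ∑ μ ∈ Δ, c μ * ⟪ν, μ⟫ := by
            nth_rewrite 1 [hcsum]
            rw [inner_sum]
            refine Finset.sum_congr rfl fun μ _ => ?_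
            rw [real_inner_smul_right]
          rw [heq]
          exact hlt
        have hperm : ∀ γ ∈ Rpos, w' γ ∈ Rpos := by
          intro γ hγ
          have hmem : w' γ ∈ R := Stmt12.weyl_root h hw'W (h.pos_subset hγ)
          have hval : 0 < ⟪ν, w' γ⟫ := by
            have hrw : ⟪w'⁻¹ ν, γ⟫ = ⟪ν, w' γ⟫ := Stmt12.inner_g_inv w' ν γ
            rw [← hrw, hνinvfix]
            exact hνpos γ hγ
          rcases h.pos_or_neg _ hmem with hp | hn
          · exact hp
          · exfalso
            have := hνdom _ hn
            rw [inner_neg_right] at this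
            linarith
        exact hw'1 (Stmt12.weyl_perm_id h hw'W hperm)
  obtain ⟨αi, hαiΔ, hαicase⟩ := hkey
  set iΔ : ↥Δ := ⟨αi, hαiΔ⟩ with hiΔ
  have hαiR : αi ∈ R := hR_of_simple αi hαiΔ
  have hαine : αi ≠ 0 := h.nonzero αi hαiR
  obtain ⟨qlam, hqlam⟩ := Stmt12.lam_pair_rat h hlat hαiR
  have hqlam0 : 0 ≤ qlam := by
    have hd := hdom αi (h.simple_subset hαiΔ)
    rw [hqlam] at hd
    exact_mod_cast hd
  -- the heart inequality
  have hheart : ⟪lam, αi⟫ / 2 ≤ tR iΔ := by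
    rcases hαicase with hzero | hνzero
    · rw [hzero]
      simpa using htR0 iΔ
    · have hpair : ⟪lam - ν, αi⟫ = ⟪lam, αi⟫ := by
        rw [inner_sub_left, hνzero, sub_zero]
      have hexp : ⟪lam - ν, αi⟫ = ∑ j : ↥Δ, tR j * ⟪coroot (j : V), αi⟫ := by
        rw [hxsum, sum_inner]
        exact Finset.sum_congr rfl fun j _ => real_inner_smul_left _ _ _
      have hbound : ∑ j : ↥Δ, tR j * ⟪coroot (j : V), αi⟫ ≤ 2 * tR iΔ := by
        have hle : ∀ j : ↥Δ, tR j * ⟪coroot (j : V), αi⟫ ≤ (if j = iΔ then 2 * tR iΔ else 0) := by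
          intro j
          split_ifs with hj
          · rw [hj]
            have : ⟪coroot ((iΔ : ↥Δ) : V), αi⟫ = 2 := Stmt12.inner_coroot_self hαine
            rw [this]
            linarith [htR0 iΔ]
          · have hjne : (j : V) ≠ αi := fun hc => hj (Subtype.ext hc)
            have hoff : ⟪(j : V), αi⟫ ≤ 0 := Stmt12.offdiag h hαiΔ j.2 hjne
            have hjj : 0 < ⟪(j : V), (j : V)⟫ :=
              Stmt12.iself_pos (h.nonzero _ (hR_of_simple _ j.2))
            have hfac : ⟪coroot (j : V), αi⟫ ≤ 0 := by
              rw [Stmt12.coroot_inner]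
              apply mul_nonpos_of_nonneg_of_nonpos
              · positivity
              · exact hoff
            exact mul_nonpos_of_nonneg_of_nonpos (htR0 j) hfac
        calc ∑ j : ↥Δ, tR j * ⟪coroot (j : V), αi⟫
            ≤ ∑ j : ↥Δ, (if j = iΔ then 2 * tR iΔ else 0) :=
              Finset.sum_le_sum fun j _ => hle j
          _ = 2 * tR iΔ := by
              rw [Finset.sum_ite_eq' Finset.univ iΔ (fun _ => 2 * tR iΔ)]
              simp
      have := hpair ▸ hexp
      linarith [this ▸ hbound]
  -- assemble
  refine ⟨αi, hαiΔ, ?_, ?_⟩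
  · refine ⟨fun β => if β = αi then qlam / 2 else 0, ?_, ?_⟩
    · intro β _
      dsimp only
      split_ifs
      · positivity
      · exact le_refl 0
    · dsimp only
      rw [sub_sub_cancel]
      have estep : ∀ β ∈ Δ, (((if β = αi then qlam / 2 else 0 : ℚ)) : ℝ) • coroot β
          = if β = αi then (⟪lam, αi⟫ / 2) • coroot αi else 0 := by
        intro β _
        split_ifs with hh
        · rw [hh]
          congr 1
          rw [hqlam]
          push_cast
          ring
        · simp
      rw [Finset.sum_congr rfl estep,
        Finset.sum_ite_eq' Δ αi (fun _ => (⟪lam, αi⟫ / 2) • coroot αi)]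
      simp [hαiΔ]
  · refine ⟨fun β => (if hβ : β ∈ Δ then tq ⟨β, hβ⟩ else 0) - (if β = αi then qlam / 2 else 0),
      ?_, ?_⟩
    · intro β hβ
      dsimp only
      rw [dif_pos hβ]
      split_ifs with hh
      · have hsub' : (⟨β, hβ⟩ : ↥Δ) = iΔ := Subtype.ext hh
        rw [hsub', sub_nonneg]
        have hH := hheart
        rw [hqlam, htq iΔ] at hH
        exact_mod_cast hH
      · rw [sub_zero]
        have := htR0 ⟨β, hβ⟩
        rw [htq ⟨β, hβ⟩] at this
        exact_mod_cast this
    · dsimp only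
      have hsplit : ∀ β ∈ Δ,
          ((((if hβ : β ∈ Δ then tq ⟨β, hβ⟩ else 0) - (if β = αi then qlam / 2 else 0) : ℚ)) : ℝ)
            • coroot β
          = ((if hβ : β ∈ Δ then tq ⟨β, hβ⟩ else 0 : ℚ) : ℝ) • coroot β
            - (((if β = αi then qlam / 2 else 0 : ℚ)) : ℝ) • coroot β := by
        intro β _
        push_cast
        rw [sub_smul]
      have hsum1 : ∑ β ∈ Δ, ((if hβ : β ∈ Δ then tq ⟨β, hβ⟩ else 0 : ℚ) : ℝ) • coroot β
          = lam - ν := by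
        rw [← Finset.sum_attach Δ
          (fun β => ((if hβ : β ∈ Δ then tq ⟨β, hβ⟩ else 0 : ℚ) : ℝ) • coroot β)]
        rw [hxsum, Finset.univ_eq_attach]
        refine Finset.sum_congr rfl fun j _ => ?_
        rw [dif_pos j.2, ← htq j]
      have hite : ∑ β ∈ Δ, (((if β = αi then qlam / 2 else 0 : ℚ)) : ℝ) • coroot β
          = (⟪lam, αi⟫ / 2) • coroot αi := by
        have estep : ∀ β ∈ Δ, (((if β = αi then qlam / 2 else 0 : ℚ)) : ℝ) • coroot β
            = if β = αi then (⟪lam, αi⟫ / 2) • coroot αi else 0 := by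
          intro β _
          split_ifs with hh
          · rw [hh]
            congr 1
            rw [hqlam]
            push_cast
            ring
          · simp
        rw [Finset.sum_congr rfl estep,
          Finset.sum_ite_eq' Δ αi (fun _ => (⟪lam, αi⟫ / 2) • coroot αi)]
        simp [hαiΔ]
      rw [Finset.sum_congr rfl hsplit, Finset.sum_sub_distrib, hsum1, hite]
      abel
end
end
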